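/- arXiv:2102.10061 — 8 statements merged into one kernel-verified Lean document; each statement's English description precedes it below -/
import Mathlib

section
/- For every graph G, wcol_∞(G) equals the treedepth of G, where wcol_∞ allows weakly reachable paths of arbitrary length. -/
open SimpleGraph

/-- `u` is weakly `∞`-reachable from `v` in the ordering `σ`. -/
def WeaklyReachableInf {V : Type} (G : SimpleGraph V) (σ : V → ℕ) (v u : V) : Prop :=
  ∃ p : G.Walk u v, p.IsPath ∧ ∀ w ∈ p.support, σ u ≤ σ w

/-- `wcol_∞(G)`. -/
noncomputable def wcolInf {V : Type} (G : SimpleGraph V) : ℕ :=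
  sInf { n | ∃ σ : V → ℕ, Function.Injective σ ∧
    sSup { m | ∃ v : V, {u | WeaklyReachableInf G σ v u}.ncard = m } = n }

/-- The treedepth of `G`: the minimum `k` such that there is a forest order `le` on the
vertices (a partial order in which the set of ancestors of every element is a chain) whose
closure contains `G` (adjacent vertices are comparable) and all of whose chains have at
most `k` elements. -/
noncomputable def treedepth {V : Type} (G : SimpleGraph V) : ℕ :=
  sInf { k | ∃ le : V → V → Prop,
    (∀ v, le v v) ∧
    (∀ u v w, le u v → le v w → le u w) ∧
    (∀ u v, le u v → le v u → u = v) ∧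
    (∀ u v w, le u w → le v w → le u v ∨ le v u) ∧
    (∀ u v, G.Adj u v → le u v ∨ le v u) ∧
    (∀ c : Set V, IsChain le c → c.ncard ≤ k) }

section Aux

variable {V : Type} {G : SimpleGraph V} {σ : V → ℕ}

lemma wr_of_walk {u v : V} (p : G.Walk u v) (h : ∀ w ∈ p.support, σ u ≤ σ w) :
    WeaklyReachableInf G σ v u := by
  classical
  exact ⟨p.bypass, p.bypass_isPath, fun w hw => h w (p.support_bypass_subset hw)⟩

lemma wr_refl (v : V) : WeaklyReachableInf G σ v v :=
  wr_of_walk Walk.nil (by simp)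

lemma wr_le {u v : V} (h : WeaklyReachableInf G σ v u) : σ u ≤ σ v := by
  obtain ⟨p, -, hp⟩ := h
  exact hp v p.end_mem_support

/-- From an injective ordering, the weak reachability relation is a forest order whose
chains are bounded by the max weak reachability number. -/
lemma treedepth_le_aux [Fintype V] (hσ : Function.Injective σ) :
    treedepth G ≤ sSup { m | ∃ v : V, {u | WeaklyReachableInf G σ v u}.ncard = m } := by
  set M := { m | ∃ v : V, {u | WeaklyReachableInf G σ v u}.ncard = m } with hM
  have hbdd : BddAbove M := by
    refine ⟨Nat.card V, fun m hm => ?_⟩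
    obtain ⟨v, hv⟩ := hm
    rw [← hv, ← Set.ncard_univ]
    exact Set.ncard_le_ncard (Set.subset_univ _) Set.finite_univ
  set le : V → V → Prop := fun u v => WeaklyReachableInf G σ v u with hle
  have hmono : ∀ u v, le u v → σ u ≤ σ v := fun u v h => wr_le h
  have htrans : ∀ u v w, le u v → le v w → le u w := by
    intro u v w ⟨p, _, hp⟩ ⟨q, _, hq⟩
    refine wr_of_walk (p.append q) ?_
    intro x hx
    rcases (Walk.mem_support_append_iff _ _).1 hx with h | h
    · exact hp x h
    · exact le_trans (hp v p.end_mem_support) (hq x h)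
  apply Nat.sInf_le
  refine ⟨le, fun v => wr_refl v, htrans, ?_, ?_, ?_, ?_⟩
  · intro u v h1 h2
    exact hσ (le_antisymm (hmono _ _ h1) (hmono _ _ h2))
  · -- ancestors comparable
    intro u v w h1 h2
    rcases le_total (σ u) (σ v) with hs | hs
    · left
      obtain ⟨p, _, hp⟩ := h1
      obtain ⟨q, _, hq⟩ := h2
      refine wr_of_walk (p.append q.reverse) ?_
      intro x hx
      rcases (Walk.mem_support_append_iff _ _).1 hx with h | h
      · exact hp x h
      · rw [Walk.support_reverse, List.mem_reverse] at h
        exact le_trans hs (hq x h)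
    · right
      obtain ⟨p, _, hp⟩ := h1
      obtain ⟨q, _, hq⟩ := h2
      refine wr_of_walk (q.append p.reverse) ?_
      intro x hx
      rcases (Walk.mem_support_append_iff _ _).1 hx with h | h
      · exact hq x h
      · rw [Walk.support_reverse, List.mem_reverse] at h
        exact le_trans hs (hp x h)
  · -- adjacency
    intro u v hadj
    rcases le_total (σ u) (σ v) with hs | hs
    · left
      refine wr_of_walk hadj.toWalk ?_
      intro x hx
      have : x = u ∨ x = v := by simpa using hx
      rcases this with rfl | rfl
      · exact le_rfl
      · exact hs
    · right
      refine wr_of_walk hadj.symm.toWalk ?_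
      intro x hx
      have : x = v ∨ x = u := by simpa using hx
      rcases this with rfl | rfl
      · exact le_rfl
      · exact hs
  · -- chains bounded
    intro c hc
    rcases c.eq_empty_or_nonempty with rfl | hne
    · simp
    · have hfin : c.Finite := Set.toFinite c
      obtain ⟨a, ha, hmax⟩ : ∃ a ∈ c, ∀ a' ∈ c, σ a ≤ σ a' → σ a = σ a' := by
        obtain ⟨a, ha, hmax⟩ := hfin.exists_maximalFor σ c hne
        exact ⟨a, ha, fun a' h1 h2 => le_antisymm h2 (hmax h1 h2)⟩
      have hsub : c ⊆ {u | WeaklyReachableInf G σ a u} := by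
        intro u hu
        rcases eq_or_ne u a with rfl | hne'
        · exact wr_refl u
        · rcases hc hu ha hne' with h | h
          · exact h
          · -- le a u : σ a ≤ σ u, maximality gives σ a = σ u so a = u
            have := hmax u hu (hmono _ _ h)
            exact absurd (hσ this.symm) hne'
      calc c.ncard ≤ {u | WeaklyReachableInf G σ a u}.ncard :=
            Set.ncard_le_ncard hsub (Set.toFinite _)
        _ ≤ sSup M := le_csSup hbdd ⟨a, rfl⟩

end Aux

section Aux2

variable {V : Type} {G : SimpleGraph V}

lemma wcolInf_le_aux [Fintype V] {k : ℕ} {le : V → V → Prop}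
    (hrefl : ∀ v, le v v) (htrans : ∀ u v w, le u v → le v w → le u w)
    (hanti : ∀ u v, le u v → le v u → u = v)
    (hforest : ∀ u v w, le u w → le v w → le u v ∨ le v u)
    (hadj : ∀ u v, G.Adj u v → le u v ∨ le v u)
    (hchain : ∀ c : Set V, IsChain le c → c.ncard ≤ k) :
    wcolInf G ≤ k := by
  classical
  set N : ℕ := Fintype.card V + 1 with hN
  set ι : V → ℕ := fun v => ((Fintype.equivFin V) v : ℕ) with hι
  have hιinj : Function.Injective ι := by
    intro u v h
    exact (Fintype.equivFin V).injective (Fin.ext h)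
  have hιlt : ∀ v, ι v < N := fun v => Nat.lt_succ_of_lt ((Fintype.equivFin V) v).isLt
  set d : V → ℕ := fun v => {w | le w v}.ncard with hd
  set σ : V → ℕ := fun v => ι v + d v * N with hσ
  have hdlt : ∀ u v, le u v → u ≠ v → d u < d v := by
    intro u v huv hne
    refine Set.ncard_lt_ncard ?_ (Set.toFinite _)
    constructor
    · intro w hw
      exact htrans w u v hw huv
    · intro hsub
      exact hne (hanti u v huv (hsub (hrefl v)))
  have hinj : Function.Injective σ := by
    intro u v h
    apply hιinj
    have h1 : σ u % N = ι u := by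
      simp only [hσ, Nat.add_mul_mod_self_right]
      exact Nat.mod_eq_of_lt (hιlt u)
    have h2 : σ v % N = ι v := by
      simp only [hσ, Nat.add_mul_mod_self_right]
      exact Nat.mod_eq_of_lt (hιlt v)
    rw [← h1, ← h2, h]
  have hmono : ∀ u v, le u v → σ u ≤ σ v := by
    intro u v huv
    rcases eq_or_ne u v with rfl | hne
    · exact le_rfl
    · have hlt : d u + 1 ≤ d v := hdlt u v huv hne
      have := hιlt u
      refine le_of_lt ?_
      calc ι u + d u * N ≤ N - 1 + d u * N := by omega
        _ < (d u + 1) * N := by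
            have : 0 < N := by omega
            rw [add_mul, one_mul]
            omega
        _ ≤ d v * N := Nat.mul_le_mul_right N hlt
        _ ≤ ι v + d v * N := Nat.le_add_left _ _
  -- weakly reachable implies ancestor
  have haux : ∀ u : V, ∀ {a v : V} (p : G.Walk a v), le u a →
      (∀ w ∈ p.support, σ u ≤ σ w) → le u v := by
    intro u a v p
    induction p with
    | nil => intro h _; exact h
    | @cons x y z hxy q ih =>
      intro hux hsup
      have hyb : le u y := by
        rcases hadj x y hxy with hxy' | hyx'
        · exact htrans u x y hux hxy'
        · rcases hforest u y x hux hyx' with h1 | h1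
          · exact h1
          · have hle1 : σ y ≤ σ u := hmono y u h1
            have hle2 : σ u ≤ σ y := hsup y (by simp)
            have : u = y := hinj (le_antisymm hle2 hle1)
            rw [this]; exact hrefl y
      exact ih hyb (fun w hw => hsup w (by simp [hw]))
  have hreach : ∀ v u : V, WeaklyReachableInf G σ v u → le u v := by
    intro v u ⟨p, _, hp⟩
    exact haux u p (hrefl u) hp
  have hsup_le : sSup { m | ∃ v : V, {u | WeaklyReachableInf G σ v u}.ncard = m } ≤ k := by
    apply csSup_le'
    rintro m ⟨v, rfl⟩
    calc {u | WeaklyReachableInf G σ v u}.ncard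
        ≤ {u | le u v}.ncard :=
          Set.ncard_le_ncard (fun u hu => hreach v u hu) (Set.toFinite _)
      _ ≤ k := hchain _ (fun a ha b hb _ => hforest a b v ha hb)
  exact le_trans (Nat.sInf_le ⟨σ, hinj, rfl⟩) hsup_le

end Aux2

theorem wcolInf_eq_treedepth
    {V : Type} [Fintype V] (G : SimpleGraph V) :
    wcolInf G = treedepth G := by
  classical
  apply le_antisymm
  · -- wcolInf ≤ treedepth
    have hBne : (treedepth G) ∈ { k | ∃ le : V → V → Prop,
        (∀ v, le v v) ∧
        (∀ u v w, le u v → le v w → le u w) ∧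
        (∀ u v, le u v → le v u → u = v) ∧
        (∀ u v w, le u w → le v w → le u v ∨ le v u) ∧
        (∀ u v, G.Adj u v → le u v ∨ le v u) ∧
        (∀ c : Set V, IsChain le c → c.ncard ≤ k) } := by
      apply Nat.sInf_mem
      refine ⟨Nat.card V, fun u v => ((Fintype.equivFin V) u : ℕ) ≤ (Fintype.equivFin V) v,
        fun v => le_rfl, fun u v w h1 h2 => le_trans h1 h2, ?_, ?_, ?_, ?_⟩
      · intro u v h1 h2
        exact (Fintype.equivFin V).injective (Fin.ext (le_antisymm h1 h2))
      · intro u v w _ _; exact le_total _ _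
      · intro u v _; exact le_total _ _
      · intro c _
        rw [← Set.ncard_univ]
        exact Set.ncard_le_ncard (Set.subset_univ _) Set.finite_univ
    obtain ⟨le, h1, h2, h3, h4, h5, h6⟩ := hBne
    exact wcolInf_le_aux h1 h2 h3 h4 h5 h6
  · -- treedepth ≤ wcolInf
    have hAne : (wcolInf G) ∈ { n | ∃ σ : V → ℕ, Function.Injective σ ∧
        sSup { m | ∃ v : V, {u | WeaklyReachableInf G σ v u}.ncard = m } = n } := by
      apply Nat.sInf_mem
      exact ⟨_, ⟨fun v => ((Fintype.equivFin V) v : ℕ),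
        fun u v h => (Fintype.equivFin V).injective (Fin.ext h), rfl⟩⟩
    obtain ⟨σ, hinj, hsup⟩ := hAne
    rw [← hsup]
    exact treedepth_le_aux hinj
end

section
/- For every integer r ≥ 1 and every path P, the r-th weak coloring number of P is at most ⌈log₂ r⌉ + 2. -/
open SimpleGraph

/-- `u` is weakly `r`-reachable from `v` in the ordering `σ`:
there is a `u`–`v` path of length at most `r` all of whose vertices `w` satisfy `σ u ≤ σ w`. -/
def WeaklyReachable {V : Type} (G : SimpleGraph V) (σ : V → ℕ) (r : ℕ) (v u : V) : Prop :=
  ∃ p : G.Walk u v, p.IsPath ∧ p.length ≤ r ∧ ∀ w ∈ p.support, σ u ≤ σ w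

/-- `wcol_r(G, σ)`: the maximum over vertices `v` of `|WReach_r[G,σ,v]|`. -/
noncomputable def wcolOrd {V : Type} (G : SimpleGraph V) (σ : V → ℕ) (r : ℕ) : ℕ :=
  sSup { n | ∃ v : V, {u | WeaklyReachable G σ r v u}.ncard = n }

/-- `wcol_r(G)`: the minimum of `wcol_r(G, σ)` over vertex orderings `σ`. -/
noncomputable def wcol {V : Type} (G : SimpleGraph V) (r : ℕ) : ℕ :=
  sInf { n | ∃ σ : V → ℕ, Function.Injective σ ∧ wcolOrd G σ r = n }

namespace WcolPath

/-- 2-adic valuation. -/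
def v2 (p : ℕ) : ℕ := p.factorization 2

lemma v2_spec (p : ℕ) (hp : p ≠ 0) : ∃ a, p = 2 ^ v2 p * a ∧ a % 2 = 1 := by
  refine ⟨p / 2 ^ v2 p, ?_, ?_⟩
  · exact (Nat.mul_div_cancel' (Nat.ordProj_dvd p 2)).symm
  · exact Nat.two_dvd_ne_zero.mp (Nat.not_dvd_ordCompl Nat.prime_two hp)
lemma v2_le (p : ℕ) : v2 p ≤ p := by
  rcases Nat.eq_zero_or_pos p with h | h
  · simp [v2, h]
  · have h1 : 2 ^ v2 p ∣ p := Nat.ordProj_dvd p 2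
    have h2 : 2 ^ v2 p ≤ p := Nat.le_of_dvd h h1
    have h3 : v2 p < 2 ^ v2 p := Nat.lt_two_pow_self
    omega
lemma le_v2_of_dvd {k p : ℕ} (hp : p ≠ 0) (h : 2 ^ k ∣ p) : k ≤ v2 p :=
  (Nat.Prime.pow_dvd_iff_le_factorization Nat.prime_two hp).mp h
lemma v2_eq_zero_iff_odd {p : ℕ} (hp : p ≠ 0) : v2 p = 0 ↔ p % 2 = 1 := by
  constructor
  · intro h
    obtain ⟨a, ha, ha2⟩ := v2_spec p hp
    rw [h] at ha; simpa [ha] using ha2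
  · intro h
    by_contra hne
    have : 2 ^ 1 ∣ p := by
      have : 1 ≤ v2 p := by omega
      exact dvd_trans (pow_dvd_pow 2 this) (Nat.ordProj_dvd p 2)
    omega


def delta (x k : ℕ) : ℕ := if (x / 2^k) % 2 = 1 then x % 2^k else 2^k - x % 2^k

def cand (x k : ℕ) : ℕ := if (x / 2^k) % 2 = 1 then 2^k * (x / 2^k) else 2^k * (x / 2^k + 1)

lemma pairsum_aux (B C M Q g q T : ℕ) (hB : 0 < B) (hCM : C = B * M) (hM2 : M % 2 = 0)
    (hQC : Q < C) (hQgq : Q = B * g + q) (hqB : q < B) :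
    B ≤ (if g % 2 = 1 then q else B - q) + (if T % 2 = 1 then Q else C - Q) := by
  have hgM : g < M := by
    by_contra hcon
    push_neg at hcon
    have := Nat.mul_le_mul_left B hcon
    omega
  split
  · -- g odd
    rename_i hg
    have h1 : B * 1 ≤ B * g := Nat.mul_le_mul_left B (by omega)
    rw [mul_one] at h1
    split
    · omega
    · have h2 : B * (g + 1) ≤ B * M := Nat.mul_le_mul_left B (by omega)
      rw [mul_add, mul_one] at h2
      omega
  · -- g even
    rename_i hg
    split
    · omega
    · have h2 : B * (g + 2) ≤ B * M := Nat.mul_le_mul_left B (by omega)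
      rw [mul_add] at h2
      omega

lemma pairsum (x : ℕ) {k K : ℕ} (h : k < K) : 2^k ≤ delta x k + delta x K := by
  have hB : (0:ℕ) < 2^k := Nat.pow_pos (by norm_num)
  have hC : (0:ℕ) < 2^K := Nat.pow_pos (by norm_num)
  have hCM : (2:ℕ)^K = 2^k * 2^(K-k) := by rw [← pow_add]; congr 1; omega
  have hM2 : (2:ℕ)^(K-k) % 2 = 0 := by
    have : (2:ℕ) ∣ 2^(K-k) := dvd_pow_self 2 (by omega)
    omega
  have hq : x % 2^k = x % 2^K % 2^k :=
    (Nat.mod_mod_of_dvd x ⟨2^(K-k), hCM⟩).symm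
  have hbit : (x / 2^k) % 2 = (x % 2^K / 2^k) % 2 := by
    have h1 : x / 2^k = 2^(K-k) * (x / 2^K) + x % 2^K / 2^k := by
      conv_lhs => rw [← Nat.div_add_mod x (2^K)]
      rw [hCM, mul_assoc, Nat.mul_add_div hB]
    have h2 : (2^(K-k) * (x / 2^K)) % 2 = 0 := by
      rw [Nat.mul_mod, hM2]; simp
    omega
  unfold delta
  rw [hq, hbit]
  exact pairsum_aux (2^k) (2^K) (2^(K-k)) (x % 2^K) (x % 2^K / 2^k) (x % 2^K % 2^k)
    (x / 2^K) hB hCM hM2 (Nat.mod_lt _ hC) (Nat.div_add_mod _ _).symm (Nat.mod_lt _ hB)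

lemma delta_odd {x k : ℕ} (hx : x % 2 = 1) (hk : 1 ≤ k) : delta x k % 2 = 1 := by
  have h2 : (2:ℕ) ∣ 2^k := dvd_pow_self 2 (by omega)
  have hq : x % 2^k % 2 = 1 := by rw [Nat.mod_mod_of_dvd x h2]; exact hx
  have hqB : x % 2^k < 2^k := Nat.mod_lt _ (Nat.pow_pos (by norm_num))
  unfold delta
  split <;> omega


lemma count {r x : ℕ} (hr : 2 ≤ r) (hx : x ≠ 0) (A : Finset ℕ)
    (hA : ∀ k ∈ A, v2 x < k ∧ delta x k ≤ r) : A.card ≤ Nat.clog 2 r + 1 := by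
  by_contra hcon
  push_neg at hcon
  set c := Nat.clog 2 r with hc
  have hc1 : 1 ≤ c := by
    have := (Nat.lt_clog_iff_pow_lt (by norm_num : (1:ℕ) < 2)).mpr
      (show (2:ℕ)^0 < r by simp; omega)
    omega
  have hAne : A.Nonempty := Finset.card_pos.mp (by omega)
  set K := A.max' hAne with hK
  have hKA : K ∈ A := A.max'_mem hAne
  set A' := A.erase K with hA'
  have hA'card : A'.card = A.card - 1 := Finset.card_erase_of_mem hKA
  have hA'ne : A'.Nonempty := Finset.card_pos.mp (by omega)
  set k := A'.max' hA'ne with hk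
  have hkA' : k ∈ A' := A'.max'_mem hA'ne
  have hkA : k ∈ A := Finset.mem_of_mem_erase hkA'
  have hkK : k < K := lt_of_le_of_ne (A.le_max' k hkA) (Finset.ne_of_mem_erase hkA')
  have hsub : A' ⊆ Finset.Icc (v2 x + 1) k := by
    intro j hj
    have hjA := Finset.mem_of_mem_erase hj
    have h1 := (hA j hjA).1
    have h2 := A'.le_max' j hj
    simp only [Finset.mem_Icc]
    omega
  have hcard2 : A'.card ≤ k - v2 x := by
    have := Finset.card_le_card hsub
    simpa [Nat.card_Icc] using this
  have hk_lb : v2 x + c + 1 ≤ k := by omega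
  have hp := pairsum x hkK
  have hdk := (hA k hkA).2
  have hdK := (hA K hKA).2
  have h2k : 2^k ≤ 2 * r := by omega
  have hrc : r ≤ 2^c := Nat.le_pow_clog (by norm_num) r
  have hmono : (2:ℕ)^(c+1) ≤ 2^k := Nat.pow_le_pow_right (by norm_num) (by omega)
  have h2c : (2:ℕ)^(c+1) = 2 * 2^c := by ring
  have he1 : (2:ℕ)^k = 2^(c+1) := by omega
  have hk_eq : k = c + 1 := Nat.pow_right_injective (by norm_num) he1
  have hv20 : v2 x = 0 := by omega
  have hxodd : x % 2 = 1 := (v2_eq_zero_iff_odd hx).mp hv20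
  have hdko : delta x k % 2 = 1 := delta_odd hxodd (by omega)
  have hdkr : delta x k = r := by omega
  have hev : (2:ℕ) ∣ 2^c := dvd_pow_self 2 (by omega)
  omega

lemma extract {r x p : ℕ} (hx : 1 ≤ x) (hp : 1 ≤ p) (hne : p ≠ x)
    (hd1 : p ≤ x + r) (hd2 : x ≤ p + r)
    (H : ∀ q, (p ≤ q ∧ q ≤ x) ∨ (x ≤ q ∧ q ≤ p) → v2 q < v2 p ∨ (v2 q = v2 p ∧ p ≤ q)) :
    v2 x < v2 p ∧ p = cand x (v2 p) ∧ delta x (v2 p) ≤ r := by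
  obtain ⟨a, hpa, haodd⟩ := v2_spec p (by omega)
  set k := v2 p with hk
  have hBpos : (0:ℕ) < 2^k := Nat.pow_pos (by norm_num)
  have mul_le : ∀ {u w : ℕ}, u ≤ w → 2^k * u ≤ 2^k * w :=
    fun h => Nat.mul_le_mul_left _ h
  have dvd2 : ∀ b : ℕ, b % 2 = 0 → 2^(k+1) ∣ 2^k * b := by
    intro b hb
    obtain ⟨t, ht⟩ : ∃ t, b = 2 * t := ⟨b / 2, by omega⟩
    exact ⟨t, by rw [ht, pow_succ]; ring⟩
  have key : ∀ q, ((p ≤ q ∧ q ≤ x) ∨ (x ≤ q ∧ q ≤ p)) → 1 ≤ q → ¬ (2^(k+1) ∣ q) := by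
    intro q hbet hq1 hdvd
    have h1 := le_v2_of_dvd (by omega) hdvd
    have h2 : v2 q ≠ k := by omega
    rcases H q hbet with h | h <;> omega
  -- Step 1 : v2 x < k
  have hs1 : v2 x < k := by
    rcases H x (by omega) with h | h
    · exact h
    · exfalso
      obtain ⟨b, hxb, hbodd⟩ := v2_spec x (by omega)
      rw [h.1] at hxb
      have hab : a < b := by
        by_contra hcon
        push_neg at hcon
        have := mul_le hcon
        omega
      have hex : 2^k * (a+1) = 2^k * a + 2^k := by ring
      have hle : 2^k * (a+1) ≤ 2^k * b := mul_le (by omega)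
      exact key (2^k * (a+1)) (by omega) (by omega) (dvd2 (a+1) (by omega))
  -- Step 2 : distance < 2^k
  have hs2L : p < x → x < p + 2^k := by
    intro hpx
    by_contra hcon
    push_neg at hcon
    have hex : 2^k * (a+1) = 2^k * a + 2^k := by ring
    exact key (2^k * (a+1)) (by omega) (by omega) (dvd2 (a+1) (by omega))
  have hs2R : x < p → p < x + 2^k := by
    intro hxp
    by_contra hcon
    push_neg at hcon
    have ha3 : 2 ≤ a := by
      by_contra hcon2
      have ha1 : a = 1 := by omega
      rw [ha1, mul_one] at hpa
      omega
    obtain ⟨a', ha'⟩ : ∃ a', a = a' + 1 := ⟨a - 1, by omega⟩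
    have hex : 2^k * a = 2^k * a' + 2^k := by rw [ha']; ring
    exact key (2^k * a') (by omega) (by omega) (dvd2 a' (by omega))
  -- Step 3
  set D := x / 2^k with hD
  set m := x % 2^k with hm
  have hxDm : 2^k * D + m = x := Nat.div_add_mod x (2^k)
  have hmlt : m < 2^k := Nat.mod_lt _ hBpos
  have hm0 : m ≠ 0 := by
    intro h0
    have : 2^k ∣ x := by
      refine ⟨D, ?_⟩
      omega
    have := le_v2_of_dvd (by omega) this
    omega
  refine ⟨hs1, ?_⟩
  rcases Nat.lt_or_ge p x with hpx | hge
  · -- p < x, show a = D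
    have hbd := hs2L hpx
    have haD : a = D := by
      by_contra hcon
      rcases Nat.lt_or_ge a D with h1 | h1
      · have hle : 2^k * (a+1) ≤ 2^k * D := mul_le (by omega)
        have hex : 2^k * (a+1) = 2^k * a + 2^k := by ring
        omega
      · have h2 : D < a := by omega
        have hle : 2^k * (D+1) ≤ 2^k * a := mul_le (by omega)
        have hex : 2^k * (D+1) = 2^k * D + 2^k := by ring
        omega
    subst haD
    have hDodd : D % 2 = 1 := haodd
    constructor
    · rw [cand, ← hD, if_pos hDodd]; exact hpa
    · rw [delta, ← hD, if_pos hDodd, ← hm]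
      omega
  · have hxp : x < p := by omega
    have hbd := hs2R hxp
    have ha3 : 1 ≤ a := by omega
    obtain ⟨a', ha'⟩ : ∃ a', a = a' + 1 := ⟨a - 1, by omega⟩
    have hex : 2^k * a = 2^k * a' + 2^k := by rw [ha']; ring
    have haD : a' = D := by
      by_contra hcon
      rcases Nat.lt_or_ge a' D with h1 | h1
      · have hle : 2^k * (a'+1) ≤ 2^k * D := mul_le (by omega)
        have hex2 : 2^k * (a'+1) = 2^k * a' + 2^k := by ring
        omega
      · have h2 : D < a' := by omega
        have hle : 2^k * (D+1) ≤ 2^k * a' := mul_le (by omega)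
        have hex2 : 2^k * (D+1) = 2^k * D + 2^k := by ring
        omega
    subst haD
    have hDev : ¬ (D % 2 = 1) := by omega
    constructor
    · rw [cand, ← hD, if_neg hDev]
      have : 2^k * (D + 1) = 2^k * D + 2^k := by ring
      omega
    · rw [delta, ← hD, if_neg hDev, ← hm]
      omega

lemma walk_length {n : ℕ} {u v : Fin n} (p : (pathGraph n).Walk u v) :
    u.val ≤ v.val + p.length ∧ v.val ≤ u.val + p.length := by
  induction p with
  | nil => simp
  | cons h q ih =>
    rw [SimpleGraph.pathGraph_adj] at h
    rw [SimpleGraph.Walk.length_cons]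
    omega

lemma walk_ivt {n : ℕ} {u v : Fin n} (p : (pathGraph n).Walk u v) (x : Fin n) :
    ((u.val ≤ x.val ∧ x.val ≤ v.val) ∨ (v.val ≤ x.val ∧ x.val ≤ u.val)) →
    x ∈ p.support := by
  induction p with
  | nil =>
    intro hx
    simp only [SimpleGraph.Walk.support_nil, List.mem_singleton]
    exact Fin.ext (by omega)
  | @cons a b c h q ih =>
    intro hx
    rw [SimpleGraph.Walk.support_cons, List.mem_cons]
    by_cases hxa : x = a
    · exact Or.inl hxa
    · refine Or.inr (ih ?_)
      have hne : x.val ≠ a.val := fun hh => hxa (Fin.ext hh)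
      rw [SimpleGraph.pathGraph_adj] at h
      omega

def sigma (n : ℕ) (i : Fin n) : ℕ := (n + 1 - v2 (i.val + 1)) * (n + 1) + i.val

lemma cmp_lemma (A B i j N : ℕ) (hi : i < N) (hj : j < N) :
    A * N + i ≤ B * N + j ↔ A < B ∨ (A = B ∧ i ≤ j) := by
  constructor
  · intro h
    rcases lt_trichotomy A B with h1 | h1 | h1
    · exact Or.inl h1
    · subst h1; exact Or.inr ⟨rfl, by omega⟩
    · exfalso
      have h2 : (B+1) * N ≤ A * N := Nat.mul_le_mul_right N (by omega)
      have h3 : (B+1) * N = B * N + N := by ring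
      omega
  · rintro (h1 | ⟨h1, h2⟩)
    · have h2 : (A+1) * N ≤ B * N := Nat.mul_le_mul_right N (by omega)
      have h3 : (A+1) * N = A * N + N := by ring
      omega
    · subst h1; omega

lemma sigma_inj (n : ℕ) : Function.Injective (sigma n) := by
  intro i j h
  have e1 : (n + 1 - v2 (i.val + 1)) * (n + 1) + i.val
      ≤ (n + 1 - v2 (j.val + 1)) * (n + 1) + j.val := le_of_eq h
  have e2 : (n + 1 - v2 (j.val + 1)) * (n + 1) + j.val
      ≤ (n + 1 - v2 (i.val + 1)) * (n + 1) + i.val := le_of_eq h.symm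
  rw [cmp_lemma _ _ _ _ _ (by omega) (by omega)] at e1 e2
  exact Fin.ext (by omega)

lemma sigma_le_iff {n : ℕ} (i j : Fin n) :
    sigma n i ≤ sigma n j ↔
      (v2 (j.val+1) < v2 (i.val+1) ∨ (v2 (i.val+1) = v2 (j.val+1) ∧ i.val ≤ j.val)) := by
  have hvi : v2 (i.val + 1) ≤ n := le_trans (v2_le _) (by omega)
  have hvj : v2 (j.val + 1) ≤ n := le_trans (v2_le _) (by omega)
  rw [sigma, sigma, cmp_lemma _ _ _ _ _ (by omega) (by omega)]
  omega


lemma ncard_bound {n r : ℕ} (hr : 2 ≤ r) (v : Fin n) :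
    {u | WeaklyReachable (pathGraph n) (sigma n) r v u}.ncard ≤ Nat.clog 2 r + 2 := by
  classical
  set x := v.val + 1 with hxdef
  set A : Finset ℕ :=
    Finset.filter (fun k => v2 x < k ∧ delta x k ≤ r) (Finset.range (x + r + 1)) with hAdef
  set g : ℕ → Fin n := fun k => if h : cand x k - 1 < n then ⟨cand x k - 1, h⟩ else v with hgdef
  have hsub : {u | WeaklyReachable (pathGraph n) (sigma n) r v u} ⊆ insert v (g '' ↑A) := by
    intro u hu
    by_cases huv : u = v
    · exact Set.mem_insert_iff.mpr (Or.inl huv)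
    refine Set.mem_insert_iff.mpr (Or.inr ?_)
    obtain ⟨p, _, hlen, hwal⟩ := hu
    have hlen2 := walk_length p
    have H : ∀ q, ((u.val + 1 ≤ q ∧ q ≤ x) ∨ (x ≤ q ∧ q ≤ u.val + 1)) →
        v2 q < v2 (u.val + 1) ∨ (v2 q = v2 (u.val + 1) ∧ u.val + 1 ≤ q) := by
      intro q hq
      have hqn : q - 1 < n := by omega
      set w : Fin n := ⟨q - 1, hqn⟩ with hwdef
      have hwv : w.val + 1 = q := by simp [hwdef]; omega
      have hw : w ∈ p.support := walk_ivt p w (by simp [hwdef]; omega)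
      have hσ := hwal w hw
      rw [sigma_le_iff, hwv] at hσ
      omega
    have hne : u.val + 1 ≠ x := fun hh => huv (Fin.ext (by omega))
    have hext := extract (r := r) (x := x) (p := u.val + 1) (by omega) (by omega) hne
      (by omega) (by omega) H
    refine ⟨v2 (u.val + 1), ?_, ?_⟩
    · simp only [hAdef, Finset.coe_filter, Finset.mem_coe, Finset.mem_range,
        Set.mem_setOf_eq]
      have := v2_le (u.val + 1)
      exact ⟨by omega, hext.1, hext.2.2⟩
    · have hcand : cand x (v2 (u.val + 1)) = u.val + 1 := hext.2.1.symm
      rw [hgdef]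
      simp only
      rw [dif_pos (by omega : cand x (v2 (u.val + 1)) - 1 < n)]
      exact Fin.ext (by simp [hcand])
  have hfin : ((g '' ↑A) : Set (Fin n)).Finite := (A.finite_toSet.image g)
  calc {u | WeaklyReachable (pathGraph n) (sigma n) r v u}.ncard
      ≤ (insert v (g '' ↑A)).ncard := Set.ncard_le_ncard hsub (hfin.insert v)
    _ ≤ (g '' ↑A).ncard + 1 := Set.ncard_insert_le _ _
    _ ≤ (↑A : Set ℕ).ncard + 1 := by
        have := Set.ncard_image_le (s := (↑A : Set ℕ)) (f := g) A.finite_toSet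
        omega
    _ = A.card + 1 := by rw [Set.ncard_coe_finset]
    _ ≤ (Nat.clog 2 r + 1) + 1 := by
        have hcnt := count hr (by omega : x ≠ 0) A (fun k hk => by
          simp only [hAdef, Finset.mem_filter] at hk
          exact hk.2)
        omega

lemma ncard_bound_one {n : ℕ} (v : Fin n) :
    {u | WeaklyReachable (pathGraph n) Fin.val 1 v u}.ncard ≤ 2 := by
  have hsub : {u | WeaklyReachable (pathGraph n) Fin.val 1 v u}
      ⊆ insert v {u : Fin n | u.val + 1 = v.val} := by
    intro u hu
    obtain ⟨p, _, hlen, hwal⟩ := hu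
    have h1 := walk_length p
    have h2 := hwal v p.end_mem_support
    simp only [Set.mem_insert_iff, Set.mem_setOf_eq]
    by_cases huv : u = v
    · exact Or.inl huv
    · right
      have : u.val ≠ v.val := fun hh => huv (Fin.ext hh)
      omega
  have hss : ({u : Fin n | u.val + 1 = v.val}).Subsingleton := by
    intro a ha b hb
    simp only [Set.mem_setOf_eq] at ha hb
    exact Fin.ext (by omega)
  have hfin : ({u : Fin n | u.val + 1 = v.val}).Finite := hss.finite
  calc {u | WeaklyReachable (pathGraph n) Fin.val 1 v u}.ncard
      ≤ (insert v {u : Fin n | u.val + 1 = v.val}).ncard :=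
        Set.ncard_le_ncard hsub (hfin.insert v)
    _ ≤ {u : Fin n | u.val + 1 = v.val}.ncard + 1 := Set.ncard_insert_le _ _
    _ ≤ 1 + 1 := by
        have h1 : {u : Fin n | u.val + 1 = v.val}.ncard ≤ 1 :=
          (Set.ncard_le_one_iff hfin).mpr (fun ha hb => hss ha hb)
        omega
    _ = 2 := rfl

end WcolPath

theorem wcol_path_upper (r n : ℕ) (hr : 1 ≤ r) :
    wcol (pathGraph n) r ≤ Nat.clog 2 r + 2 := by
  rcases eq_or_lt_of_le hr with h1 | h2
  · have hle : wcol (pathGraph n) 1 ≤ wcolOrd (pathGraph n) Fin.val 1 :=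
      Nat.sInf_le ⟨Fin.val, Fin.val_injective, rfl⟩
    have hOrd : wcolOrd (pathGraph n) Fin.val 1 ≤ 2 := by
      apply csSup_le'
      rintro t ⟨v, rfl⟩
      exact WcolPath.ncard_bound_one v
    rw [← h1]
    simpa [Nat.clog_one_right] using le_trans hle hOrd
  · have hle : wcol (pathGraph n) r ≤ wcolOrd (pathGraph n) (WcolPath.sigma n) r :=
      Nat.sInf_le ⟨WcolPath.sigma n, WcolPath.sigma_inj n, rfl⟩
    have hOrd : wcolOrd (pathGraph n) (WcolPath.sigma n) r ≤ Nat.clog 2 r + 2 := by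
      apply csSup_le'
      rintro t ⟨v, rfl⟩
      exact WcolPath.ncard_bound (by omega) v
    exact le_trans hle hOrd
end

section
/- For every integer r ≥ 1 and every path P on at least 2r vertices, the r-th weak coloring number of P is at least ⌈log₂(r+1)⌉ + 1. -/
open SimpleGraph

def walkUp (n a : ℕ) : (k : ℕ) → (h : a + k < n) → (pathGraph n).Walk ⟨a, by omega⟩ ⟨a + k, h⟩
  | 0, _ => SimpleGraph.Walk.nil
  | k+1, h => (walkUp n a k (by omega)).concat (by rw [pathGraph_adj]; left; rfl)

lemma walkUp_length (n a : ℕ) : ∀ (k : ℕ) (h : a + k < n), (walkUp n a k h).length = k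
  | 0, _ => rfl
  | k+1, h => by simp [walkUp, SimpleGraph.Walk.length_concat, walkUp_length n a k]

lemma walkUp_support (n a : ℕ) : ∀ (k : ℕ) (h : a + k < n) (x : Fin n),
    x ∈ (walkUp n a k h).support → a ≤ x.val ∧ x.val ≤ a + k
  | 0, _, x => by
    simp only [walkUp, SimpleGraph.Walk.support_nil, List.mem_singleton]
    rintro rfl; simp
  | k+1, h, x => by
    simp only [walkUp, SimpleGraph.Walk.support_concat, List.concat_eq_append,
      List.mem_append, List.mem_singleton]
    rintro (hx | rfl)
    · have := walkUp_support n a k (by omega) x hx; omega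
    · simp

lemma walkUp_isPath (n a : ℕ) : ∀ (k : ℕ) (h : a + k < n), (walkUp n a k h).IsPath
  | 0, _ => SimpleGraph.Walk.IsPath.nil
  | k+1, h => by
    rw [SimpleGraph.Walk.isPath_def]
    simp only [walkUp, SimpleGraph.Walk.support_concat, List.concat_eq_append,
      List.nodup_append, List.nodup_singleton]
    refine ⟨(SimpleGraph.Walk.isPath_def _).mp (walkUp_isPath n a k (by omega)), ?_⟩
    simp only [List.disjoint_singleton, true_and]
    intro x hx y hy
    simp only [List.mem_singleton] at hy
    subst hy
    rintro rfl
    have := walkUp_support n a k (by omega) _ hx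
    simp at this

/-- a monotone walk between any two vertices `u ≤ w` of the path graph -/
def walkBetween {n : ℕ} (u w : Fin n) (huw : u.val ≤ w.val) : (pathGraph n).Walk u w :=
  ((walkUp n u.val (w.val - u.val) (by omega)).copy (Fin.eta u _)
    (by ext; simp; omega))

lemma walkBetween_length {n : ℕ} (u w : Fin n) (huw : u.val ≤ w.val) :
    (walkBetween u w huw).length = w.val - u.val := by
  simp [walkBetween, walkUp_length]

lemma walkBetween_support {n : ℕ} (u w : Fin n) (huw : u.val ≤ w.val) (x : Fin n)
    (hx : x ∈ (walkBetween u w huw).support) : u.val ≤ x.val ∧ x.val ≤ w.val := by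
  simp only [walkBetween, SimpleGraph.Walk.support_copy] at hx
  have := walkUp_support n u.val _ _ x hx
  omega

lemma walkBetween_isPath {n : ℕ} (u w : Fin n) (huw : u.val ≤ w.val) :
    (walkBetween u w huw).IsPath := by
  simp [walkBetween, walkUp_isPath]

lemma wcol_inner (n : ℕ) (σ : Fin n → ℕ) :
    ∀ s : ℕ, 1 ≤ s → ∀ a : ℕ, a + s ≤ n →
    ∃ (w : Fin n) (S : Finset (Fin n)),
      (a ≤ w.val ∧ w.val < a + s) ∧
      (∀ u ∈ S, a ≤ u.val ∧ u.val < a + s) ∧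
      Nat.clog 2 (s+1) ≤ S.card ∧
      ∀ u ∈ S, ∃ p : (pathGraph n).Walk u w, p.IsPath ∧
        ∀ x ∈ p.support, (a ≤ x.val ∧ x.val < a + s) ∧ σ u ≤ σ x := by
  intro s
  induction s using Nat.strong_induction_on with
  | _ s IH =>
  intro hs a ha
  rcases eq_or_lt_of_le hs with h1 | h2
  · -- s = 1
    obtain rfl := h1.symm
    refine ⟨⟨a, by omega⟩, {⟨a, by omega⟩}, by simp, by simp, ?_, ?_⟩
    · have : Nat.clog 2 (1+1) ≤ 1 := by
        rw [Nat.clog_le_iff_le_pow one_lt_two]; norm_num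
      simpa using this
    · intro u hu
      simp only [Finset.mem_singleton] at hu
      subst hu
      exact ⟨SimpleGraph.Walk.nil, SimpleGraph.Walk.IsPath.nil, by simp⟩
  · -- s ≥ 2
    set I : Finset (Fin n) := Finset.univ.filter (fun x => a ≤ x.val ∧ x.val < a + s) with hIdef
    have hI : I.Nonempty := ⟨⟨a, by omega⟩, by simp [hIdef]; omega⟩
    obtain ⟨v, hvI, hvmin⟩ := Finset.exists_min_image I σ hI
    have hv : a ≤ v.val ∧ v.val < a + s := by simpa [hIdef] using hvI
    have hmemI : ∀ x : Fin n, a ≤ x.val → x.val < a + s → x ∈ I := by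
      intro x h1 h2; simp [hIdef]; omega
    by_cases hside : s - 1 - (v.val - a) ≤ v.val - a
    · -- recurse on left interval [a, v.val)
      have ht1 : 1 ≤ v.val - a := by omega
      obtain ⟨w, S, hw, hS, hcard, hpaths⟩ :=
        IH (v.val - a) (by omega) ht1 a (by omega)
      have hvS : v ∉ S := fun h => by have := hS v h; omega
      refine ⟨w, insert v S, by omega, ?_, ?_, ?_⟩
      · intro u hu
        rcases Finset.mem_insert.mp hu with rfl | hu
        · exact hv
        · have := hS u hu; omega
      · rw [Finset.card_insert_of_notMem hvS]
        rw [Nat.clog_le_iff_le_pow one_lt_two, pow_succ]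
        have h1 := Nat.le_pow_clog one_lt_two (v.val - a + 1)
        have h2 : 2 ^ Nat.clog 2 (v.val - a + 1) ≤ 2 ^ S.card :=
          Nat.pow_le_pow_right (by norm_num) hcard
        omega
      · intro u hu
        rcases Finset.mem_insert.mp hu with rfl | hu
        · -- u = v : walk from v down to w
          refine ⟨(walkBetween w u (by omega)).reverse, ((walkBetween_isPath w u _)).reverse, ?_⟩
          intro x hx
          rw [SimpleGraph.Walk.support_reverse, List.mem_reverse] at hx
          have hb := walkBetween_support w u (by omega) x hx
          exact ⟨⟨by omega, by omega⟩, hvmin x (hmemI x (by omega) (by omega))⟩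
        · obtain ⟨p, hp1, hp2⟩ := hpaths u hu
          refine ⟨p, hp1, fun x hx => ?_⟩
          have := hp2 x hx
          exact ⟨⟨by omega, by omega⟩, this.2⟩
    · -- recurse on right interval (v.val, a+s)
      have ht1 : 1 ≤ s - 1 - (v.val - a) := by omega
      obtain ⟨w, S, hw, hS, hcard, hpaths⟩ :=
        IH (s - 1 - (v.val - a)) (by omega) ht1 (v.val + 1) (by omega)
      have hvS : v ∉ S := fun h => by have := hS v h; omega
      refine ⟨w, insert v S, by omega, ?_, ?_, ?_⟩
      · intro u hu
        rcases Finset.mem_insert.mp hu with rfl | hu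
        · exact hv
        · have := hS u hu; omega
      · rw [Finset.card_insert_of_notMem hvS]
        rw [Nat.clog_le_iff_le_pow one_lt_two, pow_succ]
        have h1 := Nat.le_pow_clog one_lt_two (s - 1 - (v.val - a) + 1)
        have h2 : 2 ^ Nat.clog 2 (s - 1 - (v.val - a) + 1) ≤ 2 ^ S.card :=
          Nat.pow_le_pow_right (by norm_num) hcard
        omega
      · intro u hu
        rcases Finset.mem_insert.mp hu with rfl | hu
        · -- u = v : walk from v up to w
          refine ⟨walkBetween u w (by omega), walkBetween_isPath u w _, ?_⟩
          intro x hx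
          have hb := walkBetween_support u w (by omega) x hx
          exact ⟨⟨by omega, by omega⟩, hvmin x (hmemI x (by omega) (by omega))⟩
        · obtain ⟨p, hp1, hp2⟩ := hpaths u hu
          refine ⟨p, hp1, fun x hx => ?_⟩
          have := hp2 x hx
          exact ⟨⟨by omega, by omega⟩, this.2⟩

lemma wcol_top (n r : ℕ) (hr : 1 ≤ r) (hn : 2 * r ≤ n) (σ : Fin n → ℕ) :
    ∃ (w : Fin n) (T : Finset (Fin n)), Nat.clog 2 (r + 1) + 1 ≤ T.card ∧
      ∀ u ∈ T, WeaklyReachable (pathGraph n) σ r w u := by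
  set I : Finset (Fin n) := Finset.univ.filter (fun x => x.val < 2 * r) with hIdef
  have hI : I.Nonempty := ⟨⟨0, by omega⟩, by simp [hIdef]; omega⟩
  obtain ⟨v, hvI, hvmin⟩ := Finset.exists_min_image I σ hI
  have hv : v.val < 2 * r := by simpa [hIdef] using hvI
  have hmin : ∀ x : Fin n, x.val < 2 * r → σ v ≤ σ x := by
    intro x hx; exact hvmin x (by simp [hIdef]; omega)
  -- choose the interval of size r adjacent to v
  obtain ⟨a, ha1, ha2⟩ : ∃ a : ℕ, a + r ≤ n ∧
      ((a + r = v.val ∧ v.val < 2 * r) ∨ (a = v.val + 1 ∧ a + r ≤ 2 * r)) := by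
    by_cases hc : r ≤ v.val
    · exact ⟨v.val - r, by omega, Or.inl (by omega)⟩
    · exact ⟨v.val + 1, by omega, Or.inr (by omega)⟩
  obtain ⟨w, S, hw, hS, hcard, hpaths⟩ := wcol_inner n σ r hr a ha1
  have hvS : v ∉ S := by
    intro h; have := hS v h; omega
  refine ⟨w, insert v S, ?_, ?_⟩
  · rw [Finset.card_insert_of_notMem hvS]; omega
  intro u hu
  rcases Finset.mem_insert.mp hu with rfl | hu
  · -- the walk between w and v
    rcases ha2 with ⟨h1, h2⟩ | ⟨h1, h2⟩
    · -- v above the interval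
      refine ⟨(walkBetween w u (by omega)).reverse, (walkBetween_isPath w u _).reverse, ?_, ?_⟩
      · rw [SimpleGraph.Walk.length_reverse, walkBetween_length]; omega
      · intro x hx
        rw [SimpleGraph.Walk.support_reverse, List.mem_reverse] at hx
        have hb := walkBetween_support w u (by omega) x hx
        exact hmin x (by omega)
    · -- v below the interval
      refine ⟨walkBetween u w (by omega), walkBetween_isPath u w _, ?_, ?_⟩
      · rw [walkBetween_length]; omega
      · intro x hx
        have hb := walkBetween_support u w (by omega) x hx
        exact hmin x (by omega)
  · obtain ⟨p, hp1, hp2⟩ := hpaths u hu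
    refine ⟨p, hp1, ?_, fun x hx => (hp2 x hx).2⟩
    -- length bound from support living in an interval of size r
    have hnd : (p.support.map Fin.val).Nodup := hp1.support_nodup.map Fin.val_injective
    have hsub2 : (p.support.map Fin.val).toFinset ⊆ Finset.Ico a (a + r) := by
      intro m hm
      simp only [List.mem_toFinset, List.mem_map] at hm
      obtain ⟨x, hx, rfl⟩ := hm
      have := (hp2 x hx).1
      simp only [Finset.mem_Ico]; omega
    have hc := Finset.card_le_card hsub2
    rw [List.toFinset_card_of_nodup hnd] at hc
    rw [List.length_map, Nat.card_Ico] at hc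
    have hlen : p.support.length = p.length + 1 := SimpleGraph.Walk.length_support p
    omega

theorem wcol_path_lower (r n : ℕ) (hr : 1 ≤ r) (hn : 2 * r ≤ n) :
    Nat.clog 2 (r + 1) + 1 ≤ wcol (pathGraph n) r := by
  refine le_csInf ⟨wcolOrd (pathGraph n) Fin.val r, Fin.val, Fin.val_injective, rfl⟩ ?_
  rintro b ⟨σ, hσ, rfl⟩
  obtain ⟨w, T, hT, hreach⟩ := wcol_top n r hr hn σ
  have hsub : ↑T ⊆ {u | WeaklyReachable (pathGraph n) σ r w u} := by
    intro u hu; exact hreach u hu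
  have h1 : T.card ≤ {u | WeaklyReachable (pathGraph n) σ r w u}.ncard := by
    rw [← Set.ncard_coe_finset]
    exact Set.ncard_le_ncard hsub (Set.toFinite _)
  have hbdd : BddAbove { m | ∃ v : Fin n, {u | WeaklyReachable (pathGraph n) σ r v u}.ncard = m } := by
    refine ⟨n, ?_⟩
    rintro m ⟨v, rfl⟩
    calc {u | WeaklyReachable (pathGraph n) σ r v u}.ncard
        ≤ (Set.univ : Set (Fin n)).ncard := Set.ncard_le_ncard (Set.subset_univ _) Set.finite_univ
      _ = n := by simp [Set.ncard_univ]
  have hmem : {u | WeaklyReachable (pathGraph n) σ r w u}.ncard ∈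
      { m | ∃ v : Fin n, {u | WeaklyReachable (pathGraph n) σ r v u}.ncard = m } := ⟨w, rfl⟩
  calc Nat.clog 2 (r + 1) + 1 ≤ T.card := hT
    _ ≤ {u | WeaklyReachable (pathGraph n) σ r w u}.ncard := h1
    _ ≤ wcolOrd (pathGraph n) σ r := le_csSup hbdd hmem
end

section
/- For every graph G, tw(G) ≤ stw(G) ≤ tw(G) + 1, where tw is treewidth and stw is simple treewidth. -/
open SimpleGraph

/-- `(T, B)` is a tree-decomposition of `G`. -/
def IsTreeDecomp {V ι : Type} (G : SimpleGraph V) (T : SimpleGraph ι) (B : ι → Set V) : Prop :=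
  T.Connected ∧ T.IsAcyclic ∧
  (∀ v : V, ∃ t, v ∈ B t) ∧
  (∀ (v : V) (t₁ t₂ : ι), v ∈ B t₁ → v ∈ B t₂ →
    ∀ p : T.Walk t₁ t₂, p.IsPath → ∀ t ∈ p.support, v ∈ B t) ∧
  (∀ u v : V, G.Adj u v → ∃ t, u ∈ B t ∧ v ∈ B t)

/-- The treewidth of `G`. -/
noncomputable def treewidth {V : Type} (G : SimpleGraph V) : ℕ :=
  sInf { k | ∃ (ι : Type) (T : SimpleGraph ι) (B : ι → Set V),
    IsTreeDecomp G T B ∧ ∀ t, (B t).ncard ≤ k + 1 }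

/-- The simple treewidth of `G`: the least `k` admitting a `k`-simple tree-decomposition,
i.e. one of width at most `k` in which every `k`-element vertex set is contained in at
most two bags. -/
noncomputable def stw {V : Type} (G : SimpleGraph V) : ℕ :=
  sInf { k | ∃ (ι : Type) (T : SimpleGraph ι) (B : ι → Set V),
    IsTreeDecomp G T B ∧ (∀ t, (B t).ncard ≤ k + 1) ∧
    (∀ X : Set V, X.ncard = k → ∀ t₁ t₂ t₃ : ι,
      X ⊆ B t₁ → X ⊆ B t₂ → X ⊆ B t₃ → t₁ = t₂ ∨ t₁ = t₃ ∨ t₂ = t₃) }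

open SimpleGraph

section Aux

variable {V ι : Type}

/-- Identify tree nodes whose bags are equal of full size `k+1`. -/
def bagSetoid (B : ι → Set V) (k : ℕ) : Setoid ι where
  r t u := t = u ∨ (B t = B u ∧ (B t).ncard = k + 1)
  iseqv := by
    refine ⟨fun _ => Or.inl rfl, ?_, ?_⟩
    · rintro t u (rfl | ⟨h1, h2⟩)
      · exact Or.inl rfl
      · exact Or.inr ⟨h1.symm, h1 ▸ h2⟩
    · rintro t u w (rfl | ⟨h1, h2⟩) h
      · exact h
      · rcases h with rfl | ⟨h3, h4⟩
        · exact Or.inr ⟨h1, h2⟩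
        · exact Or.inr ⟨h1.trans h3, h2⟩

/-- The quotient graph on bag-classes. -/
def qGraph (T : SimpleGraph ι) (B : ι → Set V) (k : ℕ) :
    SimpleGraph (Quotient (bagSetoid B k)) where
  Adj a b := a ≠ b ∧ ∃ x y : ι,
    Quotient.mk (bagSetoid B k) x = a ∧ Quotient.mk (bagSetoid B k) y = b ∧ T.Adj x y
  symm := by
    constructor
    rintro a b ⟨hne, x, y, hx, hy, h⟩
    exact ⟨hne.symm, y, x, hy, hx, h.symm⟩
  loopless := by constructor; rintro a ⟨hne, -⟩; exact hne rfl

lemma bagSetoid_bag_eq {B : ι → Set V} {k : ℕ} {t u : ι}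
    (h : (bagSetoid B k).r t u) : B t = B u := by
  rcases h with rfl | ⟨h1, -⟩
  · rfl
  · exact h1

/-- Lift a walk in `T` to a walk in the quotient, keeping track of supports. -/
lemma lift_walk {T : SimpleGraph ι} {B : ι → Set V} {k : ℕ} :
    ∀ {t u : ι} (q : T.Walk t u) (a b : Quotient (bagSetoid B k)),
      Quotient.mk (bagSetoid B k) t = a → Quotient.mk (bagSetoid B k) u = b →
      ∃ w : (qGraph T B k).Walk a b,
        ∀ c ∈ w.support, ∃ s ∈ q.support, Quotient.mk (bagSetoid B k) s = c := by
  intro t u q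
  induction q with
  | nil =>
    rintro a b rfl rfl
    exact ⟨.nil, by simp⟩
  | @cons x y z h q ih =>
    rintro a b rfl hb
    by_cases heq : Quotient.mk (bagSetoid B k) x = Quotient.mk (bagSetoid B k) y
    · obtain ⟨w, hw⟩ := ih _ b heq.symm hb
      refine ⟨w, fun c hc => ?_⟩
      obtain ⟨s, hs, hsc⟩ := hw c hc
      exact ⟨s, by simp [hs], hsc⟩
    · obtain ⟨w, hw⟩ := ih (Quotient.mk (bagSetoid B k) y) b rfl hb
      refine ⟨Walk.cons (show (qGraph T B k).Adj _ _ from ⟨heq, x, y, rfl, rfl, h⟩) w, fun c hc => ?_⟩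
      rw [Walk.support_cons, List.mem_cons] at hc
      rcases hc with rfl | hc
      · exact ⟨x, by simp, rfl⟩
      · obtain ⟨s, hs, hsc⟩ := hw c hc
        exact ⟨s, by simp [hs], hsc⟩

variable [Fintype V]

/-- Each class is connected in `T` (through nodes of the same class). -/
lemma class_walk {G : SimpleGraph V} {T : SimpleGraph ι} {B : ι → Set V} {k : ℕ}
    (hd : IsTreeDecomp G T B) (hb : ∀ t, (B t).ncard ≤ k + 1) {t u : ι}
    (h : (bagSetoid B k).r t u) :
    ∃ q : T.Walk t u, ∀ s ∈ q.support, (bagSetoid B k).r t s := by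
  classical
  rcases h with rfl | ⟨hBeq, hcard⟩
  · refine ⟨.nil, fun s hs => ?_⟩
    rw [Walk.support_nil, List.mem_singleton] at hs
    exact Or.inl hs.symm
  · obtain ⟨w⟩ := hd.1.preconnected t u
    refine ⟨w.toPath.val, fun s hs => ?_⟩
    have hsub : B t ⊆ B s := fun v hv =>
      hd.2.2.2.1 v t u hv (hBeq ▸ hv) w.toPath.val w.toPath.prop s hs
    have : B t = B s :=
      Set.eq_of_subset_of_ncard_le hsub (le_of_le_of_eq (hb s) hcard.symm) (Set.toFinite _)
    exact Or.inr ⟨this, hcard⟩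

/-- Descend a walk in the quotient to a walk in `T`. -/
lemma descend_walk {G : SimpleGraph V} {T : SimpleGraph ι} {B : ι → Set V} {k : ℕ}
    (hd : IsTreeDecomp G T B) (hb : ∀ t, (B t).ncard ≤ k + 1) :
    ∀ {a b : Quotient (bagSetoid B k)} (w : (qGraph T B k).Walk a b) (t u : ι),
      Quotient.mk (bagSetoid B k) t = a → Quotient.mk (bagSetoid B k) u = b →
      ∃ q : T.Walk t u, ∀ x y : ι, s(x, y) ∈ q.edges →
        Quotient.mk (bagSetoid B k) x = Quotient.mk (bagSetoid B k) y ∨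
        s(Quotient.mk (bagSetoid B k) x, Quotient.mk (bagSetoid B k) y) ∈ w.edges := by
  intro a b w
  induction w with
  | nil =>
    rintro t u ht hu
    have hr : (bagSetoid B k).r t u := Quotient.exact (ht.trans hu.symm)
    obtain ⟨q, hq⟩ := class_walk hd hb hr
    refine ⟨q, fun x y hxy => Or.inl ?_⟩
    have hx := hq x (q.fst_mem_support_of_mem_edges hxy)
    have hy := hq y (q.snd_mem_support_of_mem_edges hxy)
    exact (Quotient.sound hx).symm.trans (Quotient.sound hy)
  | @cons a c b h w ih =>
    rintro t u ht hu
    obtain ⟨hne, x, y, hx, hy, hadj⟩ := id h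
    have hr : (bagSetoid B k).r t x := Quotient.exact (ht.trans hx.symm)
    obtain ⟨q₁, hq₁⟩ := class_walk hd hb hr
    obtain ⟨q₂, hq₂⟩ := ih y u hy hu
    refine ⟨q₁.append (Walk.cons hadj q₂), fun x' y' hxy => ?_⟩
    rw [Walk.edges_append, List.mem_append, Walk.edges_cons, List.mem_cons] at hxy
    rcases hxy with h1 | h2 | h3
    · refine Or.inl ?_
      have hx' := hq₁ x' (q₁.fst_mem_support_of_mem_edges h1)
      have hy' := hq₁ y' (q₁.snd_mem_support_of_mem_edges h1)
      exact (Quotient.sound hx').symm.trans (Quotient.sound hy')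
    · rw [Sym2.eq_iff] at h2
      refine Or.inr ?_
      rcases h2 with ⟨rfl, rfl⟩ | ⟨rfl, rfl⟩ <;>
        simp [hx, hy, Sym2.eq_swap]
    · rcases hq₂ x' y' h3 with h | h
      · exact Or.inl h
      · exact Or.inr (by simp [h])

lemma qGraph_isAcyclic {G : SimpleGraph V} {T : SimpleGraph ι} {B : ι → Set V} {k : ℕ}
    (hd : IsTreeDecomp G T B) (hb : ∀ t, (B t).ncard ≤ k + 1) :
    (qGraph T B k).IsAcyclic := by
  rw [isAcyclic_iff_forall_adj_isBridge]
  rintro a b ⟨hne, x, y, hx, hy, hadj⟩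
  rw [isBridge_iff_adj_and_forall_walk_mem_edges]
  refine fun w => ?_
  by_contra hmem
  obtain ⟨q, hq⟩ := descend_walk hd hb w x y hx hy
  have hbT := isAcyclic_iff_forall_adj_isBridge.mp hd.2.1 hadj
  rw [isBridge_iff_adj_and_forall_walk_mem_edges] at hbT
  rcases hq x y (hbT q) with h1 | h2
  · exact hne (hx ▸ hy ▸ h1)
  · rw [hx, hy] at h2
    exact hmem h2

end Aux

lemma lift_out {V ι : Type} {s : Setoid ι} (B : ι → Set V)
    (h : ∀ t u, s.r t u → B t = B u) (a : Quotient s) :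
    Quotient.lift B h a = B a.out := by
  conv_lhs => rw [← Quotient.out_eq a]
  rfl

lemma exists_simple {V ι : Type} [Fintype V] (G : SimpleGraph V) (T : SimpleGraph ι)
    (B : ι → Set V) (k : ℕ) (hd : IsTreeDecomp G T B) (hb : ∀ t, (B t).ncard ≤ k + 1) :
    ∃ (ι' : Type) (T' : SimpleGraph ι') (B' : ι' → Set V),
      IsTreeDecomp G T' B' ∧ (∀ t, (B' t).ncard ≤ (k + 1) + 1) ∧
      (∀ X : Set V, X.ncard = k + 1 → ∀ t₁ t₂ t₃ : ι',
        X ⊆ B' t₁ → X ⊆ B' t₂ → X ⊆ B' t₃ → t₁ = t₂ ∨ t₁ = t₃ ∨ t₂ = t₃) := by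
  classical
  refine ⟨Quotient (bagSetoid B k), qGraph T B k,
    Quotient.lift B (fun t u h => bagSetoid_bag_eq h), ?_, ?_, ?_⟩
  · refine ⟨?_, qGraph_isAcyclic hd hb, ?_, ?_, ?_⟩
    · haveI : Nonempty (Quotient (bagSetoid B k)) :=
        Nonempty.map (Quotient.mk _) hd.1.nonempty
      refine ⟨fun a b => ?_⟩
      induction a using Quotient.ind with | _ t => ?_
      induction b using Quotient.ind with | _ u => ?_
      obtain ⟨q⟩ := hd.1.preconnected t u
      obtain ⟨w, -⟩ := lift_walk q _ _ rfl rfl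
      exact ⟨w⟩
    · intro v
      obtain ⟨t, ht⟩ := hd.2.2.1 v
      exact ⟨Quotient.mk _ t, ht⟩
    · intro v a₁ a₂ hv1 hv2 p hp c hc
      have h1 : v ∈ B a₁.out := by rwa [lift_out] at hv1
      have h2 : v ∈ B a₂.out := by rwa [lift_out] at hv2
      obtain ⟨q0⟩ := hd.1.preconnected a₁.out a₂.out
      obtain ⟨w, hw⟩ := lift_walk (B := B) (k := k) q0.toPath.val a₁ a₂
        (Quotient.out_eq _) (Quotient.out_eq _)
      have hpq : p.support = (w.toPath : (qGraph T B k).Walk a₁ a₂).support := by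
        have := (qGraph_isAcyclic hd hb).path_unique ⟨p, hp⟩ w.toPath
        exact congrArg (fun z : (qGraph T B k).Path a₁ a₂ => z.val.support) this
      obtain ⟨s, hs, rfl⟩ := hw c (w.support_toPath_subset (hpq ▸ hc))
      exact hd.2.2.2.1 v a₁.out a₂.out h1 h2 q0.toPath.val q0.toPath.prop s hs
    · intro u v huv
      obtain ⟨t, h1, h2⟩ := hd.2.2.2.2 u v huv
      exact ⟨Quotient.mk _ t, h1, h2⟩
  · intro a
    induction a using Quotient.ind with | _ t => ?_
    exact (hb t).trans (Nat.le_succ _)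
  · intro X hX a₁ a₂ a₃ h1 h2 h3
    left
    have key : ∀ a : Quotient (bagSetoid B k),
        X ⊆ Quotient.lift B (fun t u h => bagSetoid_bag_eq h) a → B a.out = X := by
      intro a ha
      have ha' : X ⊆ B a.out := by rwa [lift_out] at ha
      exact (Set.eq_of_subset_of_ncard_le ha' ((hb _).trans_eq hX.symm) (Set.toFinite _)).symm
    have e1 := key a₁ h1
    have e2 := key a₂ h2
    have hr : (bagSetoid B k).r a₁.out a₂.out := Or.inr ⟨e1.trans e2.symm, by rw [e1, hX]⟩
    calc a₁ = Quotient.mk _ a₁.out := (Quotient.out_eq _).symm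
      _ = Quotient.mk _ a₂.out := Quotient.sound hr
      _ = a₂ := Quotient.out_eq _

theorem treewidth_le_stw_le_treewidth_succ
    {V : Type} [Fintype V] (G : SimpleGraph V) :
    treewidth G ≤ stw G ∧ stw G ≤ treewidth G + 1 := by
  classical
  have htriv : IsTreeDecomp G (⊥ : SimpleGraph Unit) (fun _ => (Set.univ : Set V)) := by
    refine ⟨⟨fun a b => Subsingleton.elim a b ▸ Reachable.refl a⟩, isAcyclic_bot,
      fun v => ⟨(), Set.mem_univ v⟩, fun v _ _ _ _ _ _ _ _ => Set.mem_univ v,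
      fun u v _ => ⟨(), Set.mem_univ u, Set.mem_univ v⟩⟩
  have hbnd : ∀ t : Unit, (Set.univ : Set V).ncard ≤ Fintype.card V + 1 := by
    intro t
    simp [Set.ncard_univ, Nat.card_eq_fintype_card]
  have hstw_ne : { k | ∃ (ι : Type) (T : SimpleGraph ι) (B : ι → Set V),
      IsTreeDecomp G T B ∧ (∀ t, (B t).ncard ≤ k + 1) ∧
      (∀ X : Set V, X.ncard = k → ∀ t₁ t₂ t₃ : ι,
        X ⊆ B t₁ → X ⊆ B t₂ → X ⊆ B t₃ → t₁ = t₂ ∨ t₁ = t₃ ∨ t₂ = t₃) }.Nonempty :=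
    ⟨Fintype.card V, Unit, ⊥, fun _ => Set.univ, htriv, hbnd,
      fun X _ t₁ t₂ t₃ _ _ _ => Or.inl (Subsingleton.elim _ _)⟩
  have hsub : { k | ∃ (ι : Type) (T : SimpleGraph ι) (B : ι → Set V),
      IsTreeDecomp G T B ∧ (∀ t, (B t).ncard ≤ k + 1) ∧
      (∀ X : Set V, X.ncard = k → ∀ t₁ t₂ t₃ : ι,
        X ⊆ B t₁ → X ⊆ B t₂ → X ⊆ B t₃ → t₁ = t₂ ∨ t₁ = t₃ ∨ t₂ = t₃) } ⊆
      { k | ∃ (ι : Type) (T : SimpleGraph ι) (B : ι → Set V),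
        IsTreeDecomp G T B ∧ ∀ t, (B t).ncard ≤ k + 1 } := by
    rintro k ⟨ι, T, B, h1, h2, -⟩
    exact ⟨ι, T, B, h1, h2⟩
  constructor
  · exact csInf_le_csInf (OrderBot.bddBelow _) hstw_ne hsub
  · have htw_ne := hstw_ne.mono hsub
    have hmem := Nat.sInf_mem htw_ne
    obtain ⟨ι, T, B, hd, hb⟩ := hmem
    obtain ⟨ι', T', B', h1, h2, h3⟩ := exists_simple G T B (treewidth G) hd hb
    exact Nat.sInf_le ⟨ι', T', B', h1, h2, h3⟩
end

section
/- Simple treewidth is minor-monotone: if H is a minor of G, then stw(H) ≤ stw(G). -/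
open SimpleGraph

/-- `H` is a minor of `G`: there is a family of disjoint nonempty connected branch sets
in `G`, one for each vertex of `H`, with edges of `H` realized by edges of `G`. -/
def IsMinor {W V : Type} (H : SimpleGraph W) (G : SimpleGraph V) : Prop :=
  ∃ f : W → Set V,
    (∀ w, (f w).Nonempty) ∧
    (∀ w, (G.induce (f w)).Connected) ∧
    (Pairwise fun w₁ w₂ => Disjoint (f w₁) (f w₂)) ∧
    (∀ w₁ w₂, H.Adj w₁ w₂ → ∃ u ∈ f w₁, ∃ v ∈ f w₂, G.Adj u v)

namespace StwAux

/-- Walk-form coherence condition. -/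
def WalkCoh {W ι : Type} (T : SimpleGraph ι) (B : ι → Set W) : Prop :=
  ∀ (v : W) (a b : ι), v ∈ B a → v ∈ B b →
    ∃ p : T.Walk a b, ∀ t ∈ p.support, v ∈ B t

/-- An intermediate notion of decomposition carrying the two structural conditions
`c1` and `c0` needed for the simple-treewidth argument. -/
structure Pre {W ι : Type} (H : SimpleGraph W) (T : SimpleGraph ι) (B : ι → Set W)
    (k : ℕ) : Prop where
  conn : T.Connected
  acyc : T.IsAcyclic
  cover : ∀ w, ∃ t, w ∈ B t
  coh : WalkCoh T B
  edge : ∀ w₁ w₂, H.Adj w₁ w₂ → ∃ t, w₁ ∈ B t ∧ w₂ ∈ B t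
  width : ∀ t, (B t).ncard ≤ k + 1
  c1 : ∀ X : Set W, X.ncard = k → ∀ m a b : ι, a ≠ b → T.Adj m a → T.Adj m b →
      X ⊆ B m → X ⊆ B a → X ⊆ B b → B m = X
  c0 : ∀ X : Set W, X.ncard = k → ∀ m a b c : ι, a ≠ b → a ≠ c → b ≠ c →
      T.Adj m a → T.Adj m b → T.Adj m c →
      X ⊆ B m → X ⊆ B a → X ⊆ B b → X ⊆ B c → False

variable {W V ι : Type}

/-! ### Tree helpers -/

lemma path_unique {T : SimpleGraph ι} (ha : T.IsAcyclic) {a b : ι} {p q : T.Walk a b}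
    (hp : p.IsPath) (hq : q.IsPath) : p = q := by
  have := ha.path_unique ⟨p, hp⟩ ⟨q, hq⟩
  exact congrArg Subtype.val this

lemma exists_path {T : SimpleGraph ι} (hc : T.Connected) (a b : ι) :
    ∃ p : T.Walk a b, p.IsPath := by
  classical
  obtain ⟨w⟩ := hc a b
  exact ⟨w.bypass, w.bypass_isPath⟩

/-- Any path has its support inside any set containing the support of some walk
with the same endpoints (in an acyclic graph). -/
lemma path_support_sub {T : SimpleGraph ι} (ha : T.IsAcyclic) {a b : ι}
    {p q : T.Walk a b} (hp : p.IsPath) {A : Set ι} (hq : ∀ x ∈ q.support, x ∈ A) :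
    ∀ x ∈ p.support, x ∈ A := by
  classical
  have : p = q.bypass := path_unique ha hp q.bypass_isPath
  intro x hx
  exact hq x (q.support_bypass_subset (this ▸ hx))

/-- From walk-form coherence to the path-form coherence of `IsTreeDecomp`. -/
lemma coh_of_walkCoh {T : SimpleGraph ι} {B : ι → Set W} (ha : T.IsAcyclic)
    (h : WalkCoh T B) :
    ∀ (v : W) (t₁ t₂ : ι), v ∈ B t₁ → v ∈ B t₂ →
      ∀ p : T.Walk t₁ t₂, p.IsPath → ∀ t ∈ p.support, v ∈ B t := by
  intro v t₁ t₂ h₁ h₂ p hp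
  obtain ⟨q, hq⟩ := h v t₁ t₂ h₁ h₂
  exact path_support_sub ha hp hq

/-- From path-form coherence to walk-form, given connectivity. -/
lemma walkCoh_of_coh {T : SimpleGraph ι} {B : ι → Set W} (hc : T.Connected)
    (h : ∀ (v : W) (t₁ t₂ : ι), v ∈ B t₁ → v ∈ B t₂ →
      ∀ p : T.Walk t₁ t₂, p.IsPath → ∀ t ∈ p.support, v ∈ B t) :
    WalkCoh T B := by
  intro v a b h₁ h₂
  obtain ⟨p, hp⟩ := exists_path hc a b
  exact ⟨p, h v a b h₁ h₂ p hp⟩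

/-! ### The adhesion lemma -/

lemma adhesion {G : SimpleGraph V} {T : SimpleGraph ι} {B : ι → Set V}
    (hTD : IsTreeDecomp G T B) {s t : ι} (hst : T.Adj s t)
    {S : Set V} (hS : (G.induce S).Connected)
    {u v : V} (hu : u ∈ S) (hu' : u ∈ B s) (hv : v ∈ S) (hv' : v ∈ B t) :
    ∃ x, x ∈ S ∧ x ∈ B s ∧ x ∈ B t := by
  classical
  obtain ⟨hconn, hacyc, hcover, hcoh, hedge⟩ := hTD
  by_contra hno
  push_neg at hno
  have hσs : ¬ (∀ p : T.Walk s s, p.IsPath → t ∈ p.support) := by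
    intro hs
    have := hs Walk.nil Walk.IsPath.nil
    simp only [Walk.support_nil, List.mem_singleton] at this
    exact hst.ne' this
  have hσt : ∀ p : T.Walk t s, p.IsPath → t ∈ p.support := fun p _ => p.start_mem_support
  have cross : ∀ (x : V) (r₁ r₂ : ι), x ∈ B r₁ → x ∈ B r₂ →
      (∀ p : T.Walk r₁ s, p.IsPath → t ∈ p.support) →
      ¬ (∀ p : T.Walk r₂ s, p.IsPath → t ∈ p.support) → x ∈ B s ∧ x ∈ B t := by
    intro x r₁ r₂ hx1 hx2 hs1 hs2
    push_neg at hs2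
    obtain ⟨q₂, hq₂, hq₂t⟩ := hs2
    obtain ⟨p, hp⟩ := exists_path hconn r₁ r₂
    have htp : t ∈ p.support := by
      by_contra hnt
      have hmem := hs1 (p.append q₂).bypass (p.append q₂).bypass_isPath
      have := (p.append q₂).support_bypass_subset hmem
      rw [Walk.mem_support_append_iff] at this
      tauto
    have hxt : x ∈ B t := hcoh x r₁ r₂ hx1 hx2 p hp t htp
    have hP : (Walk.cons hst.symm q₂.reverse).IsPath := by
      rw [Walk.cons_isPath_iff]
      refine ⟨hq₂.reverse, ?_⟩
      rw [Walk.support_reverse, List.mem_reverse]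
      exact hq₂t
    have hxs : x ∈ B s := by
      refine hcoh x t r₂ hxt hx2 _ hP s ?_
      rw [Walk.support_cons, List.mem_cons]
      right
      rw [Walk.support_reverse, List.mem_reverse]
      exact q₂.end_mem_support
    exact ⟨hxs, hxt⟩
  have hφv : ∃ r, (∀ p : T.Walk r s, p.IsPath → t ∈ p.support) ∧ v ∈ B r := ⟨t, hσt, hv'⟩
  have hφu : ¬ ∃ r, (∀ p : T.Walk r s, p.IsPath → t ∈ p.support) ∧ u ∈ B r := by
    rintro ⟨r, hr, hur⟩
    obtain ⟨hxs, hxt⟩ := cross u r s hur hu' hr hσs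
    exact hno u hu hxs hxt
  have prop : ∀ (a b : ↥S) (c : (G.induce S).Walk a b),
      (∃ r, (∀ p : T.Walk r s, p.IsPath → t ∈ p.support) ∧ ↑a ∈ B r) →
      (∃ r, (∀ p : T.Walk r s, p.IsPath → t ∈ p.support) ∧ ↑b ∈ B r) := by
    intro a b c
    induction c with
    | nil => exact id
    | @cons a a₂ b h c ih =>
      intro hφ
      apply ih
      have hadj : G.Adj ↑a ↑a₂ := h
      obtain ⟨r', h1, h2⟩ := hedge ↑a ↑a₂ hadj
      by_cases hsr : ∀ p : T.Walk r' s, p.IsPath → t ∈ p.support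
      · exact ⟨r', hsr, h2⟩
      · obtain ⟨r, hσr, har⟩ := hφ
        obtain ⟨hxs, hxt⟩ := cross ↑a r r' har h1 hσr hsr
        exact (hno ↑a a.2 hxs hxt).elim
  obtain ⟨c⟩ := hS ⟨v, hv⟩ ⟨u, hu⟩
  exact hφu (prop _ _ c hφv)

/-! ### Counting helpers -/

lemma two_outside {k : ℕ} {M Y : Set V} (hMfin : M.Finite) (hM : M.ncard ≤ k + 1)
    (hY : Y ⊆ M) (hYcard : Y.ncard = k) {β γ : V} (hβ : β ∈ M) (hγ : γ ∈ M)
    (hβY : β ∉ Y) (hγY : γ ∉ Y) (hbg : β ≠ γ) : False := by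
  have hYfin : Y.Finite := hMfin.subset hY
  have h1 : (insert γ Y).ncard = k + 1 := by
    rw [Set.ncard_insert_of_notMem hγY hYfin, hYcard]
  have h2 : (insert β (insert γ Y)).ncard = k + 2 := by
    rw [Set.ncard_insert_of_notMem (by simp [hbg, hβY]) (hYfin.insert _), h1]
  have hsub : insert β (insert γ Y) ⊆ M := by
    intro x hx
    rcases hx with rfl | hx
    · exact hβ
    · rcases hx with rfl | hx
      · exact hγ
      · exact hY hx
  have := Set.ncard_le_ncard hsub hMfin
  omega

/-! ### The pullback decomposition -/

lemma pullback [Fintype W] [Fintype V] (H : SimpleGraph W) (G : SimpleGraph V)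
    {f : W → Set V}
    (hne : ∀ w, (f w).Nonempty) (hconn : ∀ w, (G.induce (f w)).Connected)
    (hdisj : Pairwise fun w₁ w₂ => Disjoint (f w₁) (f w₂))
    (hedge : ∀ w₁ w₂, H.Adj w₁ w₂ → ∃ u ∈ f w₁, ∃ v ∈ f w₂, G.Adj u v)
    {T : SimpleGraph ι} {B : ι → Set V} {k : ℕ}
    (hTD : IsTreeDecomp G T B) (hwidth : ∀ t, (B t).ncard ≤ k + 1)
    (hsimp : ∀ X : Set V, X.ncard = k → ∀ t₁ t₂ t₃ : ι,
      X ⊆ B t₁ → X ⊆ B t₂ → X ⊆ B t₃ → t₁ = t₂ ∨ t₁ = t₃ ∨ t₂ = t₃) :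
    Pre H T (fun t => {w | (f w ∩ B t).Nonempty}) k := by
  classical
  have hTD' := hTD
  obtain ⟨hTc, hacyc, hcover, hcoh, hedgeG⟩ := hTD'
  have hdd : ∀ {w₁ w₂ : W} {x : V}, x ∈ f w₁ → x ∈ f w₂ → w₁ = w₂ := by
    intro w₁ w₂ x h1 h2
    by_contra hnee
    exact Set.disjoint_left.mp (hdisj hnee) h1 h2
  have pick : ∀ (m' a' : ι), T.Adj m' a' → ∀ w : W, (f w ∩ B m').Nonempty →
      (f w ∩ B a').Nonempty → ∃ x, x ∈ f w ∧ x ∈ B m' ∧ x ∈ B a' := by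
    intro m' a' hadj w h1 h2
    obtain ⟨x1, hx1f, hx1B⟩ := h1
    obtain ⟨x2, hx2f, hx2B⟩ := h2
    obtain ⟨x, hx⟩ := adhesion hTD hadj (hconn w) hx1f hx1B hx2f hx2B
    exact ⟨x, hx⟩
  refine ⟨hTc, hacyc, ?_, ?_, ?_, ?_, ?_, ?_⟩
  · -- cover
    intro w
    obtain ⟨v, hv⟩ := hne w
    obtain ⟨t₀, ht₀⟩ := hcover v
    exact ⟨t₀, ⟨v, hv, ht₀⟩⟩
  · -- coherence
    have inner : ∀ (w : W) (u v : ↥(f w)) (c : (G.induce (f w)).Walk u v) (a b : ι),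
        ↑u ∈ B a → ↑v ∈ B b →
        ∃ p : T.Walk a b, ∀ t' ∈ p.support, (f w ∩ B t').Nonempty := by
      intro w u v c
      induction c with
      | @nil u =>
        intro a b hua hub
        obtain ⟨p, hp⟩ := exists_path hTc a b
        exact ⟨p, fun t' ht' => ⟨↑u, u.2, hcoh ↑u a b hua hub p hp t' ht'⟩⟩
      | @cons u u₂ v h c ih =>
        intro a b hua hvb
        have hadj : G.Adj ↑u ↑u₂ := h
        obtain ⟨tm, h1, h2⟩ := hedgeG ↑u ↑u₂ hadj
        obtain ⟨p₂, hp₂⟩ := ih tm b h2 hvb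
        obtain ⟨p₁, hp₁⟩ := exists_path hTc a tm
        refine ⟨p₁.append p₂, ?_⟩
        intro t' ht'
        rw [Walk.mem_support_append_iff] at ht'
        rcases ht' with ht' | ht'
        · exact ⟨↑u, u.2, hcoh ↑u a tm hua h1 p₁ hp₁ t' ht'⟩
        · exact hp₂ t' ht'
    intro w a b h₁ h₂
    obtain ⟨x, hxf, hxB⟩ := h₁
    obtain ⟨y, hyf, hyB⟩ := h₂
    obtain ⟨c⟩ := hconn w ⟨x, hxf⟩ ⟨y, hyf⟩
    exact inner w _ _ c a b hxB hyB
  · -- edges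
    intro w₁ w₂ hadj
    obtain ⟨x, hxf, y, hyf, hxy⟩ := hedge w₁ w₂ hadj
    obtain ⟨t₀, ht1, ht2⟩ := hedgeG x y hxy
    exact ⟨t₀, ⟨x, hxf, ht1⟩, ⟨y, hyf, ht2⟩⟩
  · -- width
    intro t₀
    have : {w | (f w ∩ B t₀).Nonempty}.ncard ≤ (B t₀).ncard := by
      apply Set.ncard_le_ncard_of_injOn
        (fun w => if h : (f w ∩ B t₀).Nonempty then h.some else (hne w).some)
      · intro w hw
        simp only [Set.mem_setOf_eq] at hw
        simp only [dif_pos hw]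
        exact hw.some_mem.2
      · intro w₁ h₁ w₂ h₂ heq
        simp only [Set.mem_setOf_eq] at h₁ h₂
        simp only [dif_pos h₁, dif_pos h₂] at heq
        exact hdd (heq ▸ h₁.some_mem.1) h₂.some_mem.1
    exact this.trans (hwidth t₀)
  · -- c1
    intro X hX m a b hab hma hmb hXm hXa hXb
    set y : W → V := fun w => if h : ∃ x, x ∈ f w ∧ x ∈ B m ∧ x ∈ B a then h.choose
      else (hne w).some with hy_def
    have hy : ∀ w ∈ X, y w ∈ f w ∧ y w ∈ B m ∧ y w ∈ B a := by
      intro w hw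
      have hex := pick m a hma w (hXm hw) (hXa hw)
      simp only [hy_def, dif_pos hex]
      exact hex.choose_spec
    set z : W → V := fun w => if h : ∃ x, x ∈ f w ∧ x ∈ B m ∧ x ∈ B b then h.choose
      else (hne w).some with hz_def
    have hz : ∀ w ∈ X, z w ∈ f w ∧ z w ∈ B m ∧ z w ∈ B b := by
      intro w hw
      have hex := pick m b hmb w (hXm hw) (hXb hw)
      simp only [hz_def, dif_pos hex]
      exact hex.choose_spec
    have hYinj : Set.InjOn y X := by
      intro w₁ h₁ w₂ h₂ heq
      exact hdd ((hy w₁ h₁).1) (by rw [heq]; exact (hy w₂ h₂).1)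
    have hZinj : Set.InjOn z X := by
      intro w₁ h₁ w₂ h₂ heq
      exact hdd ((hz w₁ h₁).1) (by rw [heq]; exact (hz w₂ h₂).1)
    have hYcard : (y '' X).ncard = k := by rw [Set.ncard_image_of_injOn hYinj, hX]
    have hZcard : (z '' X).ncard = k := by rw [Set.ncard_image_of_injOn hZinj, hX]
    have hYm : y '' X ⊆ B m := by rintro _ ⟨w, hw, rfl⟩; exact (hy w hw).2.1
    have hYa : y '' X ⊆ B a := by rintro _ ⟨w, hw, rfl⟩; exact (hy w hw).2.2
    have hZm : z '' X ⊆ B m := by rintro _ ⟨w, hw, rfl⟩; exact (hz w hw).2.1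
    have hZb : z '' X ⊆ B b := by rintro _ ⟨w, hw, rfl⟩; exact (hz w hw).2.2
    have hYZ : y '' X ≠ z '' X := by
      intro hzz
      rcases hsimp (y '' X) hYcard a m b hYa hYm (hzz ▸ hZb) with h' | h' | h'
      · exact hma.ne' h'
      · exact hab h'
      · exact hmb.ne h'
    have hZsubY : ¬ z '' X ⊆ y '' X := by
      intro hsub'
      exact hYZ (Set.eq_of_subset_of_ncard_le hsub' (by rw [hYcard, hZcard])
        ((y '' X).toFinite)).symm
    obtain ⟨ζ, hζZ, hζY⟩ := Set.not_subset.mp hZsubY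
    have hins : insert ζ (y '' X) = B m := by
      apply Set.eq_of_subset_of_ncard_le
      · intro x hx
        rcases hx with rfl | hx
        · exact hZm hζZ
        · exact hYm hx
      · rw [Set.ncard_insert_of_notMem hζY ((y '' X).toFinite), hYcard]
        exact hwidth m
      · exact (B m).toFinite
    ext w'
    simp only [Set.mem_setOf_eq]
    constructor
    · rintro ⟨x', hx'f, hx'B⟩
      rw [← hins] at hx'B
      rcases hx'B with rfl | hx'B
      · obtain ⟨w₀, hw₀, he⟩ := hζZ
        rw [← he] at hx'f
        exact (hdd hx'f (hz w₀ hw₀).1) ▸ hw₀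
      · obtain ⟨w₀, hw₀, he⟩ := hx'B
        rw [← he] at hx'f
        exact (hdd hx'f (hy w₀ hw₀).1) ▸ hw₀
    · exact fun hw' => hXm hw'
  · -- c0
    intro X hX m a b c hab hac hbc hma hmb hmc hXm hXa hXb hXc
    have mk : ∀ (a' : ι), T.Adj m a' → (∀ w ∈ X, (f w ∩ B m).Nonempty) →
        (∀ w ∈ X, (f w ∩ B a').Nonempty) →
        ∃ g : W → V, (∀ w ∈ X, g w ∈ f w ∧ g w ∈ B m ∧ g w ∈ B a') ∧
          Set.InjOn g X ∧ (g '' X).ncard = k ∧ g '' X ⊆ B m ∧ g '' X ⊆ B a' := by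
      intro a' hadj hm ha'
      set g : W → V := fun w => if h : ∃ x, x ∈ f w ∧ x ∈ B m ∧ x ∈ B a' then h.choose
        else (hne w).some with hg_def
      have hg : ∀ w ∈ X, g w ∈ f w ∧ g w ∈ B m ∧ g w ∈ B a' := by
        intro w hw
        have hex := pick m a' hadj w (hm w hw) (ha' w hw)
        simp only [hg_def, dif_pos hex]
        exact hex.choose_spec
      have hinj : Set.InjOn g X := fun w₁ h₁ w₂ h₂ heq =>
        hdd ((hg w₁ h₁).1) (by rw [heq]; exact (hg w₂ h₂).1)
      exact ⟨g, hg, hinj, by rw [Set.ncard_image_of_injOn hinj, hX],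
        by rintro _ ⟨w, hw, rfl⟩; exact (hg w hw).2.1,
        by rintro _ ⟨w, hw, rfl⟩; exact (hg w hw).2.2⟩
    obtain ⟨y, hy, hyinj, hYcard, hYm, hYa⟩ := mk a hma (fun w hw => hXm hw) (fun w hw => hXa hw)
    obtain ⟨z, hz, hzinj, hZcard, hZm, hZb⟩ := mk b hmb (fun w hw => hXm hw) (fun w hw => hXb hw)
    obtain ⟨x3, hx3, hx3inj, hCcard, hCm, hCc⟩ := mk c hmc (fun w hw => hXm hw) (fun w hw => hXc hw)
    have hne3 : ∀ (g₁ g₂ : W → V) (a₁ a₂ : ι), a₁ ≠ a₂ → T.Adj m a₁ → T.Adj m a₂ →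
        (g₁ '' X).ncard = k → g₁ '' X ⊆ B a₁ → g₁ '' X ⊆ B m → g₂ '' X ⊆ B a₂ →
        g₁ '' X ≠ g₂ '' X := by
      intro g₁ g₂ a₁ a₂ h12 had1 had2 hcard h1 h1m h2 heq
      rcases hsimp (g₁ '' X) hcard a₁ m a₂ h1 h1m (heq ▸ h2) with h' | h' | h'
      · exact had1.ne' h'
      · exact h12 h'
      · exact had2.ne h'
    have hYZ : y '' X ≠ z '' X := hne3 y z a b hab hma hmb hYcard hYa hYm hZb
    have hYC : y '' X ≠ x3 '' X := hne3 y x3 a c hac hma hmc hYcard hYa hYm hCc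
    have hZC : z '' X ≠ x3 '' X := hne3 z x3 b c hbc hmb hmc hZcard hZb hZm hCc
    have getout : ∀ (g₁ g₂ : W → V), (g₁ '' X).ncard = k → (g₂ '' X).ncard = k →
        g₂ '' X ≠ g₁ '' X → ∃ ζ, ζ ∈ g₂ '' X ∧ ζ ∉ g₁ '' X := by
      intro g₁ g₂ hc1 hc2 hne'
      by_contra hcon
      push_neg at hcon
      exact hne' (Set.eq_of_subset_of_ncard_le hcon (by rw [hc1, hc2]) ((g₁ '' X).toFinite))
    have hBmfin : (B m).Finite := (B m).toFinite
    obtain ⟨ζ, hζZ, hζY⟩ := getout y z hYcard hZcard hYZ.symm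
    obtain ⟨γ, hγC, hγY⟩ := getout y x3 hYcard hCcard hYC.symm
    by_cases hζγ : ζ = γ
    · obtain ⟨w₀, hw₀, heζ⟩ := id hζZ
      obtain ⟨w₀', hw₀', heγ⟩ := id hγC
      have hw00 : w₀' = w₀ := hdd ((hx3 w₀' hw₀').1)
        (by rw [heγ, ← hζγ, ← heζ]; exact (hz w₀ hw₀).1)
      obtain ⟨δ, hδC, hδZ⟩ := getout z x3 hZcard hCcard hZC.symm
      obtain ⟨w₃, hw₃, heδ⟩ := id hδC
      have hw30 : w₃ ≠ w₀ := by
        intro hh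
        apply hδZ
        have hde : δ = ζ := by rw [← heδ, hh, ← hw00, heγ, ← hζγ]
        rw [hde]
        exact hζZ
      by_cases hδY : δ ∈ y '' X
      · obtain ⟨w', hw', heδ'⟩ := id hδY
        have hww3 : w' = w₃ := hdd (heδ' ▸ (hy w' hw').1) (heδ ▸ (hx3 w₃ hw₃).1)
        have hδz3 : δ ≠ z w₃ := by
          intro hh
          exact hδZ (by rw [hh]; exact ⟨w₃, hw₃, rfl⟩)
        have hzw3Y : z w₃ ∉ y '' X := by
          rintro ⟨w'', hw'', he''⟩
          have hww : w'' = w₃ := hdd (he'' ▸ (hy w'' hw'').1) ((hz w₃ hw₃).1)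
          apply hδz3
          rw [← he'', hww, ← hww3]
          exact heδ'.symm
        have hz30 : z w₃ ≠ ζ := by
          intro hh
          refine hw30 (hdd ((hz w₃ hw₃).1) ?_)
          rw [hh, ← heζ]
          exact (hz w₀ hw₀).1
        exact two_outside hBmfin (hwidth m) hYm hYcard (hZm ⟨w₃, hw₃, rfl⟩) (hZm hζZ)
          hzw3Y hζY hz30
      · have hδζ : δ ≠ ζ := by
          intro hh
          refine hw30 (hdd (heδ ▸ (hx3 w₃ hw₃).1) ?_)
          rw [hh, ← heζ]
          exact (hz w₀ hw₀).1
        exact two_outside hBmfin (hwidth m) hYm hYcard (hCm hδC) (hZm hζZ) hδY hζY hδζ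
    · exact two_outside hBmfin (hwidth m) hYm hYcard (hZm hζZ) (hCm hγC) hζY hγY hζγ

/-! ### Shrinking to a finite subtree -/

lemma shrink [Fintype W] {H : SimpleGraph W} {T : SimpleGraph ι} {B : ι → Set W} {k : ℕ}
    (hpre : Pre H T B k) :
    ∃ (ι₂ : Type) (_ : Fintype ι₂) (T₂ : SimpleGraph ι₂) (B₂ : ι₂ → Set W),
      Pre H T₂ B₂ k := by
  classical
  by_cases hW : Nonempty W
  case neg =>
    haveI : IsEmpty W := not_nonempty_iff.mp hW
    refine ⟨Unit, inferInstance, ⊥, fun _ => ∅, ?_, ?_, ?_, ?_, ?_, ?_, ?_, ?_⟩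
    · exact (connected_iff _).mpr ⟨fun u v => by rw [Subsingleton.elim u v], ⟨()⟩⟩
    · intro v c hc
      cases c with
      | nil => exact hc.ne_nil rfl
      | cons h _ => exact h.elim
    · exact fun w => (IsEmpty.false w).elim
    · exact fun v => (IsEmpty.false v).elim
    · exact fun w₁ w₂ _ => (IsEmpty.false w₁).elim
    · intro t; simp
    · intro X hX m a b hab hma hmb hXm hXa hXb
      have hXe : X = ∅ := Set.eq_empty_of_isEmpty X
      simp [hXe]
    · intro X hX m a b c hab hac hbc hma hmb hmc hXm hXa hXb hXc
      simp at hma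
  case pos =>
    obtain ⟨w₁⟩ := hW
    have hcoh := coh_of_walkCoh hpre.acyc hpre.coh
    choose cov hcov using hpre.cover
    set t0 := cov w₁ with ht0
    have edex : ∀ pq : W × W, ∃ t : ι, (H.Adj pq.1 pq.2 → pq.1 ∈ B t ∧ pq.2 ∈ B t) := by
      intro pq
      by_cases h : H.Adj pq.1 pq.2
      · obtain ⟨t', ht'⟩ := hpre.edge _ _ h
        exact ⟨t', fun _ => ht'⟩
      · exact ⟨t0, fun hh => absurd hh h⟩
    choose ed hed using edex
    set N : Set ι := insert t0 (Set.range cov ∪ Set.range ed) with hN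
    have hNfin : N.Finite := ((Set.finite_range cov).union (Set.finite_range ed)).insert t0
    have pathex : ∀ n : ι, ∃ p : T.Walk t0 n, p.IsPath := fun n => exists_path hpre.conn t0 n
    choose pth hpth using pathex
    set S : Set ι := ⋃ n ∈ N, {x | x ∈ (pth n).support} with hS
    have hSfin : S.Finite := hNfin.biUnion (fun n _ => List.finite_toSet (pth n).support)
    have ht0S : t0 ∈ S :=
      Set.mem_biUnion (Set.mem_insert _ _) ((pth t0).start_mem_support)
    have hNS : ∀ n ∈ N, n ∈ S := fun n hn => Set.mem_biUnion hn ((pth n).end_mem_support)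
    have hstar : ∀ a ∈ S, ∃ q : T.Walk t0 a, q.IsPath ∧ ∀ x ∈ q.support, x ∈ S := by
      intro a ha
      rw [hS] at ha
      simp only [Set.mem_iUnion, Set.mem_setOf_eq] at ha
      obtain ⟨n, hn, hmem⟩ := ha
      refine ⟨(pth n).takeUntil a hmem, (hpth n).takeUntil hmem, ?_⟩
      intro x hx
      have hx' : x ∈ (pth n).support := Walk.support_takeUntil_subset _ _ hx
      exact Set.mem_biUnion hn hx'
    have hclosed : ∀ a ∈ S, ∀ b ∈ S, ∀ (p : T.Walk a b), p.IsPath → ∀ x ∈ p.support, x ∈ S := by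
      intro a ha b hb p hp
      obtain ⟨qa, hqa, hqaS⟩ := hstar a ha
      obtain ⟨qb, hqb, hqbS⟩ := hstar b hb
      have hun : ∀ x ∈ (qa.reverse.append qb).support, x ∈ S := by
        intro x hx
        rw [Walk.mem_support_append_iff] at hx
        rcases hx with hx | hx
        · exact hqaS x (by rwa [Walk.support_reverse, List.mem_reverse] at hx)
        · exact hqbS x hx
      exact path_support_sub hpre.acyc hp hun
    have lift : ∀ {a b : ι} (p : T.Walk a b) (hpS : ∀ x ∈ p.support, x ∈ S),
        ∃ q : (T.induce S).Walk ⟨a, hpS a p.start_mem_support⟩ ⟨b, hpS b p.end_mem_support⟩,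
          ∀ x ∈ q.support, (x : ι) ∈ p.support := by
      intro a b p
      induction p with
      | nil =>
        intro h
        exact ⟨.nil, by simp⟩
      | @cons a c b h p ih =>
        intro hpS
        have htail : ∀ x ∈ p.support, x ∈ S := fun x hx =>
          hpS x (by rw [Walk.support_cons]; exact List.mem_cons_of_mem _ hx)
        obtain ⟨q, hq⟩ := ih htail
        have hadj : (T.induce S).Adj ⟨a, hpS a (Walk.cons h p).start_mem_support⟩
            ⟨c, htail c p.start_mem_support⟩ := h
        refine ⟨.cons hadj (q.copy (Subtype.ext rfl) rfl), ?_⟩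
        intro x hx
        rw [Walk.support_cons, List.mem_cons] at hx
        rcases hx with rfl | hx
        · rw [Walk.support_cons]
          exact List.mem_cons_self
        · rw [Walk.support_copy] at hx
          rw [Walk.support_cons]
          exact List.mem_cons_of_mem _ (hq x hx)
    haveI : Fintype ↥S := hSfin.fintype
    refine ⟨↥S, inferInstance, T.induce S, fun x => B ↑x, ?_, ?_, ?_, ?_, ?_, ?_, ?_, ?_⟩
    · -- connected
      refine (connected_iff _).mpr ⟨?_, ⟨⟨t0, ht0S⟩⟩⟩
      have reach : ∀ (x : ↥S), (T.induce S).Reachable ⟨t0, ht0S⟩ x := by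
        intro x
        obtain ⟨q, hq, hqS⟩ := hstar ↑x x.2
        obtain ⟨q', _⟩ := lift q (fun y hy => hqS y hy)
        exact ⟨q'.copy (Subtype.ext rfl) (Subtype.ext rfl)⟩
      intro x y
      exact (reach x).symm.trans (reach y)
    · -- acyclic
      apply isAcyclic_of_path_unique
      intro v w p q
      have hinj : Function.Injective (SimpleGraph.Embedding.induce (G := T) S).toHom :=
        Subtype.val_injective
      have h1 : (Walk.map _ p.val).IsPath := Walk.map_isPath_of_injective hinj p.2
      have h2 : (Walk.map _ q.val).IsPath := Walk.map_isPath_of_injective hinj q.2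
      have heq := path_unique hpre.acyc h1 h2
      exact Subtype.ext (Walk.map_injective_of_injective hinj v w heq)
    · -- cover
      intro w
      have hmem : cov w ∈ N := by
        rw [hN]
        exact Set.mem_insert_iff.mpr (Or.inr (Set.mem_union_left _ ⟨w, rfl⟩))
      exact ⟨⟨cov w, hNS _ hmem⟩, hcov w⟩
    · -- walk coherence
      intro v a b h₁ h₂
      obtain ⟨p, hp⟩ := exists_path hpre.conn ↑a ↑b
      have hpS : ∀ x ∈ p.support, x ∈ S := hclosed ↑a a.2 ↑b b.2 p hp
      obtain ⟨q, hq⟩ := lift p hpS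
      refine ⟨q.copy (Subtype.ext rfl) (Subtype.ext rfl), ?_⟩
      intro x hx
      rw [Walk.support_copy] at hx
      exact hcoh v ↑a ↑b h₁ h₂ p hp ↑x (hq x hx)
    · -- edges
      intro w₁ w₂ hadj
      have hmem : ed (w₁, w₂) ∈ N := by
        rw [hN]
        exact Set.mem_insert_iff.mpr (Or.inr (Set.mem_union_right _ ⟨(w₁, w₂), rfl⟩))
      exact ⟨⟨ed (w₁, w₂), hNS _ hmem⟩, hed (w₁, w₂) hadj⟩
    · exact fun x => hpre.width ↑x
    · -- c1
      intro X hX m a b hab hma hmb hXm hXa hXb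
      exact hpre.c1 X hX ↑m ↑a ↑b (fun hh => hab (Subtype.ext hh)) hma hmb hXm hXa hXb
    · -- c0
      intro X hX m a b c hab hac hbc hma hmb hmc hXm hXa hXb hXc
      exact hpre.c0 X hX ↑m ↑a ↑b ↑c (fun hh => hab (Subtype.ext hh))
        (fun hh => hac (Subtype.ext hh)) (fun hh => hbc (Subtype.ext hh))
        hma hmb hmc hXm hXa hXb hXc

/-! ### Contraction of an edge of the tree -/

section Contract

variable {T : SimpleGraph ι} {s t : ι}

def CG (T : SimpleGraph ι) (s t : ι) : SimpleGraph {x : ι // x ≠ s} where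
  Adj a b := T.Adj ↑a ↑b ∨ ((a : ι) = t ∧ (b : ι) ≠ t ∧ T.Adj s ↑b) ∨
    ((b : ι) = t ∧ (a : ι) ≠ t ∧ T.Adj s ↑a)
  symm := ⟨by intro a b h; tauto⟩
  loopless := ⟨by
    rintro a (h | ⟨h1, h2, h3⟩ | ⟨h1, h2, h3⟩)
    · exact T.loopless.irrefl _ h
    · exact h2 h1
    · exact h2 h1⟩

open Classical in
noncomputable def cpi (hst : T.Adj s t) : ι → {x : ι // x ≠ s} := fun x =>
  if h : x = s then ⟨t, fun h' => T.loopless.irrefl s (h' ▸ hst)⟩ else ⟨x, h⟩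

lemma cpi_coe (hst : T.Adj s t) (a : {x : ι // x ≠ s}) : cpi hst ↑a = a := by
  simp [cpi, a.2]

lemma cpi_s (hst : T.Adj s t) : (cpi hst s : {x : ι // x ≠ s}) = ⟨t, fun h' => T.loopless.irrefl s (h' ▸ hst)⟩ := by
  simp [cpi]

lemma CG_adj {a b : {x : ι // x ≠ s}} :
    (CG T s t).Adj a b ↔ (T.Adj ↑a ↑b ∨ ((a : ι) = t ∧ (b : ι) ≠ t ∧ T.Adj s ↑b) ∨
      ((b : ι) = t ∧ (a : ι) ≠ t ∧ T.Adj s ↑a)) := Iff.rfl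

lemma cpi_val (hst : T.Adj s t) (x : ι) [Decidable (x = s)] :
    ((cpi hst x : {y : ι // y ≠ s}) : ι) = if x = s then t else x := by
  unfold cpi
  split <;> simp_all

lemma cadj (hst : T.Adj s t) {a c : ι} (h : T.Adj a c) (hne : cpi hst a ≠ cpi hst c) :
    (CG T s t).Adj (cpi hst a) (cpi hst c) := by
  classical
  rw [CG_adj]
  by_cases has : a = s
  · have hcs : c ≠ s := fun hh => T.loopless.irrefl s (by nth_rewrite 1 [← has]; rw [← hh]; exact h)
    have va : ((cpi hst a : {y : ι // y ≠ s}) : ι) = t := by rw [cpi_val, if_pos has]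
    have vc : ((cpi hst c : {y : ι // y ≠ s}) : ι) = c := by rw [cpi_val, if_neg hcs]
    have hct : c ≠ t := by
      intro hct
      exact hne (Subtype.ext (va.trans (by rw [vc, hct])))
    refine Or.inr (Or.inl ⟨va, by rw [vc]; exact hct, by rw [vc]; exact has ▸ h⟩)
  · by_cases hcs : c = s
    · have va : ((cpi hst a : {y : ι // y ≠ s}) : ι) = a := by rw [cpi_val, if_neg has]
      have vc : ((cpi hst c : {y : ι // y ≠ s}) : ι) = t := by rw [cpi_val, if_pos hcs]
      have hat : a ≠ t := by
        intro hat
        exact hne (Subtype.ext (by rw [va, vc, hat]))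
      exact Or.inr (Or.inr ⟨vc, by rw [va]; exact hat, by rw [va]; exact hcs ▸ h.symm⟩)
    · have va : ((cpi hst a : {y : ι // y ≠ s}) : ι) = a := by rw [cpi_val, if_neg has]
      have vc : ((cpi hst c : {y : ι // y ≠ s}) : ι) = c := by rw [cpi_val, if_neg hcs]
      exact Or.inl (by rw [va, vc]; exact h)

open Classical in
noncomputable def cWalk (hst : T.Adj s t) : ∀ {a b : ι}, T.Walk a b →
    (CG T s t).Walk (cpi hst a) (cpi hst b)
  | _, _, .nil => .nil
  | _, _, .cons (v := c) h p =>
      if hc : cpi hst _ = cpi hst c then ((cWalk hst p).copy hc.symm rfl)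
      else .cons (cadj hst h hc) (cWalk hst p)

lemma cWalk_support (hst : T.Adj s t) {a b : ι} (p : T.Walk a b) :
    ∀ x, x ∈ (cWalk hst p).support ↔ ∃ y ∈ p.support, cpi hst y = x := by
  induction p with
  | nil => intro x; simp [cWalk, eq_comm]
  | @cons a c b h p ih =>
    intro x
    rw [cWalk]
    split
    · next hc =>
      rw [Walk.support_copy]
      constructor
      · intro hx
        obtain ⟨y, hy, he⟩ := (ih x).mp hx
        exact ⟨y, by simp [hy], he⟩
      · rintro ⟨y, hy, rfl⟩
        rw [Walk.support_cons, List.mem_cons] at hy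
        rcases hy with rfl | hy
        · exact (ih _).mpr ⟨c, p.start_mem_support, hc.symm⟩
        · exact (ih _).mpr ⟨y, hy, rfl⟩
    · next hc =>
      rw [Walk.support_cons, List.mem_cons]
      constructor
      · rintro (rfl | hx)
        · exact ⟨a, by simp, rfl⟩
        · obtain ⟨y, hy, he⟩ := (ih x).mp hx
          exact ⟨y, by simp [hy], he⟩
      · rintro ⟨y, hy, rfl⟩
        rw [Walk.support_cons, List.mem_cons] at hy
        rcases hy with rfl | hy
        · exact Or.inl rfl
        · exact Or.inr ((ih _).mpr ⟨y, hy, rfl⟩)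

lemma CG_connected (hst : T.Adj s t) (hc : T.Connected) : (CG T s t).Connected := by
  refine (connected_iff _).mpr ⟨?_, ⟨⟨t, hst.ne'⟩⟩⟩
  intro a b
  obtain ⟨w⟩ := hc ↑a ↑b
  exact ⟨(cWalk hst w).copy (cpi_coe hst a) (cpi_coe hst b)⟩


lemma cpi_t (hst : T.Adj s t) : cpi hst t = ⟨t, hst.ne'⟩ := by
  classical
  exact Subtype.ext (by rw [cpi_val, if_neg hst.ne'])

open Classical in
lemma cWalk_cons_eq (hst : T.Adj s t) {a c b : ι} (h : T.Adj a c) (P : T.Walk c b)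
    (hc : cpi hst a = cpi hst c) :
    cWalk hst (.cons h P) = (cWalk hst P).copy hc.symm rfl := by
  rw [cWalk]
  rw [dif_pos hc]

open Classical in
lemma cWalk_cons_ne (hst : T.Adj s t) {a c b : ι} (h : T.Adj a c) (P : T.Walk c b)
    (hc : cpi hst a ≠ cpi hst c) :
    cWalk hst (.cons h P) = .cons (cadj hst h hc) (cWalk hst P) := by
  rw [cWalk]
  rw [dif_neg hc]

lemma cWalk_copy (hst : T.Adj s t) {a b a' b' : ι} (P : T.Walk a b) (hu : a = a')
    (hv : b = b') :
    cWalk hst (P.copy hu hv) =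
      (cWalk hst P).copy (congrArg (cpi hst) hu) (congrArg (cpi hst) hv) := by
  subst hu
  subst hv
  rw [Walk.copy_rfl_rfl, Walk.copy_rfl_rfl]

lemma second_vertex (hst : T.Adj s t) (ha : T.IsAcyclic) {b : ι} (P : T.Walk t b)
    (hP : P.IsPath) (hs : s ∈ P.support) :
    ∃ Q : T.Walk s b, P = Walk.cons hst.symm Q := by
  classical
  cases P with
  | nil =>
    rw [Walk.support_nil, List.mem_singleton] at hs
    exact absurd hs.symm hst.ne'
  | @cons _ v₂ _ h₂ P₂ =>
    by_cases hv : v₂ = s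
    · subst hv
      exact ⟨P₂, rfl⟩
    · exfalso
      have hP₂ : P₂.IsPath := hP.of_cons
      have htnot : t ∉ P₂.support := ((Walk.cons_isPath_iff _ _).mp hP).2
      have hsP₂ : s ∈ P₂.support := by
        rw [Walk.support_cons, List.mem_cons] at hs
        rcases hs with hs | hs
        · exact absurd hs.symm hst.ne'
        · exact hs
      have hW : (Walk.cons h₂ (P₂.takeUntil s hsP₂)).IsPath := by
        rw [Walk.cons_isPath_iff]
        refine ⟨hP₂.takeUntil hsP₂, ?_⟩
        intro hmem
        exact htnot (Walk.support_takeUntil_subset _ _ hmem)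
      have hE : (Walk.cons hst.symm (Walk.nil : T.Walk s s)).IsPath := by
        rw [Walk.cons_isPath_iff]
        exact ⟨Walk.IsPath.nil, by simp [hst.ne']⟩
      have := path_unique ha hW hE
      have hgv := congrArg (fun w => w.getVert 1) this
      simp only [Walk.getVert_cons_succ, Walk.getVert_zero] at hgv
      exact hv hgv

/-- The expansion lemma: every path in the contracted tree is the projection of a path
in the original tree. -/
lemma expand (hst : T.Adj s t) (hc : T.Connected) (ha : T.IsAcyclic)
    {a b : {x : ι // x ≠ s}} (p : (CG T s t).Walk a b) (hp : p.IsPath) :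
    ∃ P : T.Walk ↑a ↑b, P.IsPath ∧
      (cWalk hst P).copy (cpi_coe hst a) (cpi_coe hst b) = p := by
  classical
  induction p with
  | nil =>
    refine ⟨Walk.nil, Walk.IsPath.nil, ?_⟩
    exact Walk.copy_nil _
  | @cons a c b h p ih =>
    have hp' : p.IsPath := hp.of_cons
    have hanotp : a ∉ p.support := ((Walk.cons_isPath_iff _ _).mp hp).2
    obtain ⟨P₁, hP₁, hP₁e⟩ := ih hp'
    have hsupp : ∀ x, x ∈ p.support ↔ ∃ y ∈ P₁.support, cpi hst y = x := by
      intro x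
      rw [← hP₁e, Walk.support_copy]
      exact cWalk_support hst P₁ x
    have hnaP : (a : ι) ∉ P₁.support := by
      intro hmem
      exact hanotp ((hsupp a).mpr ⟨↑a, hmem, cpi_coe hst a⟩)
    rcases CG_adj.mp h with hgen | ⟨e1, e2, e3⟩ | ⟨e1, e2, e3⟩
    · -- genuine edge
      have hcc : cpi hst ↑a ≠ cpi hst ↑c := by
        rw [cpi_coe, cpi_coe]
        intro hh
        exact hgen.ne (congrArg Subtype.val hh)
      refine ⟨Walk.cons hgen P₁, (Walk.cons_isPath_iff _ _).mpr ⟨hP₁, hnaP⟩, ?_⟩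
      rw [cWalk_cons_ne hst hgen P₁ hcc, ← hP₁e, Walk.cons_copy, Walk.copy_cons,
        Walk.copy_cons]
    · -- a is the t-node: ↑a = t, ↑c ≠ t, T.Adj s ↑c
      have hnsP : s ∉ P₁.support := by
        intro hmem
        apply hanotp
        refine (hsupp a).mpr ⟨s, hmem, ?_⟩
        rw [cpi_s]
        exact (Subtype.ext e1).symm
      have hntP : t ∉ P₁.support := by
        intro hmem
        apply hanotp
        refine (hsupp a).mpr ⟨t, hmem, ?_⟩
        rw [cpi_t]
        exact (Subtype.ext e1).symm
      have hinner : (Walk.cons e3 P₁).IsPath := (Walk.cons_isPath_iff _ _).mpr ⟨hP₁, hnsP⟩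
      have houter : (Walk.cons hst.symm (Walk.cons e3 P₁)).IsPath := by
        rw [Walk.cons_isPath_iff]
        refine ⟨hinner, ?_⟩
        rw [Walk.support_cons, List.mem_cons]
        rintro (hh | hh)
        · exact hst.ne hh.symm
        · exact hntP hh
      have hcol : cpi hst t = cpi hst s := by rw [cpi_t, cpi_s]
      have hne2 : cpi hst s ≠ cpi hst ↑c := by
        rw [cpi_s, cpi_coe]
        intro hh
        exact e2 (congrArg Subtype.val hh).symm
      refine ⟨(Walk.cons hst.symm (Walk.cons e3 P₁)).copy e1.symm rfl, ?_, ?_⟩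
      · rw [Walk.isPath_copy]
        exact houter
      · rw [cWalk_copy, cWalk_cons_eq hst hst.symm _ hcol,
          cWalk_cons_ne hst e3 P₁ hne2, ← hP₁e, Walk.cons_copy, Walk.copy_copy,
          Walk.copy_copy, Walk.copy_cons, Walk.copy_cons]
    · -- c is the t-node: ↑c = t, ↑a ≠ t, T.Adj s ↑a
      have hneAS : cpi hst ↑a ≠ cpi hst s := by
        rw [cpi_coe, cpi_s]
        intro hh
        exact e2 (congrArg Subtype.val hh)
      have hcol : cpi hst t = cpi hst s := by rw [cpi_t, cpi_s]
      by_cases hsP : s ∈ P₁.support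
      · -- P₁ starts (as a t-walk) with the edge t-s
        have hP₁' : (P₁.copy e1 rfl).IsPath := by rw [Walk.isPath_copy]; exact hP₁
        have hs' : s ∈ (P₁.copy e1 rfl).support := by rw [Walk.support_copy]; exact hsP
        obtain ⟨Q, hQe⟩ := second_vertex hst ha (P₁.copy e1 rfl) hP₁' hs'
        have hQpath : Q.IsPath := by
          rw [hQe] at hP₁'
          exact hP₁'.of_cons
        have hnaQ : (a : ι) ∉ Q.support := by
          intro hmem
          apply hnaP
          have : (a : ι) ∈ (P₁.copy e1 rfl).support := by
            rw [hQe, Walk.support_cons]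
            exact List.mem_cons_of_mem _ hmem
          rwa [Walk.support_copy] at this
        have hQc : cWalk hst (P₁.copy e1 rfl) = (cWalk hst Q).copy hcol.symm rfl := by
          rw [hQe]
          exact cWalk_cons_eq hst hst.symm Q hcol
        have hQc2 : (cWalk hst P₁).copy (congrArg (cpi hst) e1) rfl
            = (cWalk hst Q).copy hcol.symm rfl := by
          rw [← hQc, cWalk_copy]
        have hQc3 : cWalk hst Q =
            ((cWalk hst P₁).copy (congrArg (cpi hst) e1) rfl).copy hcol rfl := by
          rw [hQc2, Walk.copy_copy]
          exact (Walk.copy_rfl_rfl _).symm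
        refine ⟨Walk.cons e3.symm Q, (Walk.cons_isPath_iff _ _).mpr ⟨hQpath, hnaQ⟩, ?_⟩
        rw [cWalk_cons_ne hst e3.symm Q hneAS, hQc3, ← hP₁e, Walk.copy_copy,
          Walk.cons_copy, Walk.cons_copy, Walk.copy_cons, Walk.copy_cons,
          Walk.copy_copy, Walk.cons_copy]
      · -- insert the detour through s and t
        have hinner : (Walk.cons hst (P₁.copy e1 rfl)).IsPath := by
          rw [Walk.cons_isPath_iff, Walk.isPath_copy]
          refine ⟨hP₁, ?_⟩
          rw [Walk.support_copy]
          exact hsP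
        have houter : (Walk.cons e3.symm (Walk.cons hst (P₁.copy e1 rfl))).IsPath := by
          rw [Walk.cons_isPath_iff]
          refine ⟨hinner, ?_⟩
          rw [Walk.support_cons, List.mem_cons]
          rintro (hh | hh)
          · exact a.2 hh
          · rw [Walk.support_copy] at hh
            exact hnaP hh
        refine ⟨Walk.cons e3.symm (Walk.cons hst (P₁.copy e1 rfl)), houter, ?_⟩
        rw [cWalk_cons_ne hst e3.symm _ hneAS, cWalk_cons_eq hst hst _ hcol.symm,
          cWalk_copy, ← hP₁e, Walk.copy_copy, Walk.cons_copy, Walk.cons_copy,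
          Walk.copy_cons, Walk.copy_cons, Walk.copy_copy, Walk.cons_copy]

lemma CG_acyclic (hst : T.Adj s t) (hc : T.Connected) (ha : T.IsAcyclic) :
    (CG T s t).IsAcyclic := by
  apply isAcyclic_of_path_unique
  intro v w p q
  obtain ⟨P, hP, hPe⟩ := expand hst hc ha p.val p.2
  obtain ⟨Q, hQ, hQe⟩ := expand hst hc ha q.val q.2
  have : P = Q := path_unique ha hP hQ
  apply Subtype.ext
  rw [← hPe, ← hQe, this]

lemma contract {H : SimpleGraph W} {B : ι → Set W} {k : ℕ}
    (hpre : Pre H T B k) (hst : T.Adj s t) (hsub : B s ⊆ B t) :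
    Pre H (CG T s t) (fun x => B ↑x) k := by
  classical
  have hcoh := coh_of_walkCoh hpre.acyc hpre.coh
  have hts : t ≠ s := hst.ne'
  have key : ∀ x : ι, T.Adj s x → x ≠ t → ∀ v : W, v ∈ B x → v ∈ B t → v ∈ B s := by
    intro x hsx hxt v hvx hvt
    have hpath : (Walk.cons hsx.symm (Walk.cons hst Walk.nil) : T.Walk x t).IsPath := by
      rw [Walk.cons_isPath_iff, Walk.cons_isPath_iff]
      refine ⟨⟨Walk.IsPath.nil, by simp [hst.ne]⟩, ?_⟩
      simp [hsx.ne', hxt]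
    refine hcoh v x t hvx hvt _ hpath s ?_
    simp
  refine ⟨CG_connected hst hpre.conn, CG_acyclic hst hpre.conn hpre.acyc, ?_, ?_, ?_, ?_, ?_, ?_⟩
  · -- cover
    intro w
    obtain ⟨t₀, ht₀⟩ := hpre.cover w
    refine ⟨cpi hst t₀, ?_⟩
    show w ∈ B ↑(cpi hst t₀)
    rw [cpi_val]
    split
    · next hh => exact hsub (hh ▸ ht₀)
    · exact ht₀
  · -- walk coherence
    intro v a b h₁ h₂
    obtain ⟨p, hp⟩ := hpre.coh v ↑a ↑b h₁ h₂
    refine ⟨(cWalk hst p).copy (cpi_coe hst a) (cpi_coe hst b), ?_⟩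
    intro x hx
    rw [Walk.support_copy] at hx
    obtain ⟨y, hy, hcy⟩ := (cWalk_support hst p x).mp hx
    show v ∈ B ↑x
    rw [← hcy, cpi_val]
    split
    · next hh => exact hsub (hh ▸ hp y hy)
    · exact hp y hy
  · -- edges
    intro w₁ w₂ hadj
    obtain ⟨t₀, h1, h2⟩ := hpre.edge w₁ w₂ hadj
    refine ⟨cpi hst t₀, ?_, ?_⟩
    · show w₁ ∈ B ↑(cpi hst t₀)
      rw [cpi_val]
      split
      · next hh => exact hsub (hh ▸ h1)
      · exact h1
    · show w₂ ∈ B ↑(cpi hst t₀)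
      rw [cpi_val]
      split
      · next hh => exact hsub (hh ▸ h2)
      · exact h2
  · -- width
    exact fun x => hpre.width ↑x
  · -- c1
    intro X hX m a b hab hma hmb hXm hXa hXb
    show B ↑m = X
    have hab' : (a : ι) ≠ ↑b := fun hh => hab (Subtype.ext hh)
    rcases hma with h1 | ⟨e1, e2, e3⟩ | ⟨e1, e2, e3⟩
    · rcases hmb with g1 | ⟨f1, f2, f3⟩ | ⟨f1, f2, f3⟩
      · exact hpre.c1 X hX ↑m ↑a ↑b hab' h1 g1 hXm hXa hXb
      · -- b via s, m = t
        have hXsB : X ⊆ B s := fun v hv => key ↑b f3 f2 v (hXb hv) (f1 ▸ hXm hv)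
        have hres := hpre.c1 X hX t s ↑a (fun hh => a.2 hh.symm) hst.symm (f1 ▸ h1)
          (f1 ▸ hXm) hXsB hXa
        rw [f1]
        exact hres
      · -- b is the t-node, m attached via s
        have hXsB : X ⊆ B s := fun v hv => key ↑m f3 f2 v (hXm hv) (f1 ▸ hXb hv)
        exact hpre.c1 X hX ↑m ↑a s a.2 h1 f3.symm hXm hXa hXsB
    · -- a via s (m = t)
      rcases hmb with g1 | ⟨f1, f2, f3⟩ | ⟨f1, f2, f3⟩
      · have hXsB : X ⊆ B s := fun v hv => key ↑a e3 e2 v (hXa hv) (e1 ▸ hXm hv)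
        have hres := hpre.c1 X hX t s ↑b (fun hh => b.2 hh.symm) hst.symm (e1 ▸ g1)
          (e1 ▸ hXm) hXsB hXb
        rw [e1]
        exact hres
      · -- both via s: c0 at s with a, b, t
        have hXsB : X ⊆ B s := fun v hv => key ↑a e3 e2 v (hXa hv) (e1 ▸ hXm hv)
        exact (hpre.c0 X hX s ↑a ↑b t hab' e2 f2 e3 f3 hst hXsB hXa hXb
          (e1 ▸ hXm)).elim
      · exact (f2 e1).elim
    · -- a is the t-node, m attached via s
      rcases hmb with g1 | ⟨f1, f2, f3⟩ | ⟨f1, f2, f3⟩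
      · have hXsB : X ⊆ B s := fun v hv => key ↑m e3 e2 v (hXm hv) (e1 ▸ hXa hv)
        exact hpre.c1 X hX ↑m s ↑b (fun hh => b.2 hh.symm) e3.symm g1 hXm hXsB hXb
      · exact (e2 f1).elim
      · exact (hab (Subtype.ext (e1.trans f1.symm))).elim
  · -- c0
    intro X hX m a b c hab hac hbc hma hmb hmc hXm hXa hXb hXc
    have hab' : (a : ι) ≠ ↑b := fun hh => hab (Subtype.ext hh)
    have hac' : (a : ι) ≠ ↑c := fun hh => hac (Subtype.ext hh)
    have hbc' : (b : ι) ≠ ↑c := fun hh => hbc (Subtype.ext hh)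
    by_cases hmt : (m : ι) = t
    · have conv : ∀ (x : {x : ι // x ≠ s}), (CG T s t).Adj m x →
          T.Adj t ↑x ∨ (T.Adj s ↑x ∧ (x : ι) ≠ t) := by
        intro x hx
        rcases hx with h1 | ⟨e1, e2, e3⟩ | ⟨e1, e2, e3⟩
        · exact Or.inl (hmt ▸ h1)
        · exact Or.inr ⟨e3, e2⟩
        · exact (e2 hmt).elim
      have hXt : X ⊆ B t := fun v hv => hmt ▸ hXm hv
      have viaKey : ∀ (x : {x : ι // x ≠ s}), T.Adj s ↑x → (x : ι) ≠ t →
          X ⊆ B ↑x → X ⊆ B s := by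
        intro x hsx hxt hXx v hv
        exact key ↑x hsx hxt v (hXx hv) (hXt hv)
      rcases conv a hma with ⟨ha'⟩ | ⟨ha', hat⟩ <;>
        rcases conv b hmb with ⟨hb'⟩ | ⟨hb', hbt⟩ <;>
        rcases conv c hmc with ⟨hc'⟩ | ⟨hc', hct⟩
      · exact hpre.c0 X hX t ↑a ↑b ↑c hab' hac' hbc' ha' hb' hc' hXt hXa hXb hXc
      · exact hpre.c0 X hX t ↑a ↑b s hab' a.2 b.2 ha' hb' hst.symm hXt hXa hXb
          (viaKey c hc' hct hXc)
      · exact hpre.c0 X hX t ↑a ↑c s hac' a.2 c.2 ha' hc' hst.symm hXt hXa hXc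
          (viaKey b hb' hbt hXb)
      · exact hpre.c0 X hX s ↑b ↑c t hbc' hbt hct hb' hc' hst
          (viaKey b hb' hbt hXb) hXb hXc hXt
      · exact hpre.c0 X hX t ↑b ↑c s hbc' b.2 c.2 hb' hc' hst.symm hXt hXb hXc
          (viaKey a ha' hat hXa)
      · exact hpre.c0 X hX s ↑a ↑c t hac' hat hct ha' hc' hst
          (viaKey a ha' hat hXa) hXa hXc hXt
      · exact hpre.c0 X hX s ↑a ↑b t hab' hat hbt ha' hb' hst
          (viaKey a ha' hat hXa) hXa hXb hXt
      · exact hpre.c0 X hX s ↑a ↑b t hab' hat hbt ha' hb' hst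
          (viaKey a ha' hat hXa) hXa hXb hXt
    · have conv : ∀ (x : {x : ι // x ≠ s}), (CG T s t).Adj m x →
          T.Adj ↑m ↑x ∨ ((x : ι) = t ∧ T.Adj s ↑m) := by
        intro x hx
        rcases hx with h1 | ⟨e1, e2, e3⟩ | ⟨e1, e2, e3⟩
        · exact Or.inl h1
        · exact (hmt e1).elim
        · exact Or.inr ⟨e1, e3⟩
      have viaKey2 : T.Adj s ↑m → ∀ (x : {x : ι // x ≠ s}), (x : ι) = t →
          X ⊆ B ↑x → X ⊆ B s := by
        intro hsm x hxt hXx v hv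
        exact key ↑m hsm hmt v (hXm hv) (hxt ▸ hXx hv)
      rcases conv a hma with ⟨ha'⟩ | ⟨hat, hsm⟩
      · rcases conv b hmb with ⟨hb'⟩ | ⟨hbt, hsm⟩
        · rcases conv c hmc with ⟨hc'⟩ | ⟨hct, hsm⟩
          · exact hpre.c0 X hX ↑m ↑a ↑b ↑c hab' hac' hbc' ha' hb' hc' hXm hXa hXb hXc
          · exact hpre.c0 X hX ↑m ↑a ↑b s hab' a.2 b.2 ha' hb' hsm.symm hXm hXa hXb
              (viaKey2 hsm c hct hXc)
        · rcases conv c hmc with ⟨hc'⟩ | ⟨hct, hsm'⟩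
          · exact hpre.c0 X hX ↑m ↑a ↑c s hac' a.2 c.2 ha' hc' hsm.symm hXm hXa hXc
              (viaKey2 hsm b hbt hXb)
          · exact (hbc (Subtype.ext (hbt.trans hct.symm))).elim
      · rcases conv b hmb with ⟨hb'⟩ | ⟨hbt, hsm'⟩
        · rcases conv c hmc with ⟨hc'⟩ | ⟨hct, hsm'⟩
          · exact hpre.c0 X hX ↑m ↑b ↑c s hbc' b.2 c.2 hb' hc' hsm.symm hXm hXb hXc
              (viaKey2 hsm a hat hXa)
          · exact (hac (Subtype.ext (hat.trans hct.symm))).elim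
        · exact (hab (Subtype.ext (hat.trans hbt.symm))).elim

end Contract

/-! ### Tightening -/

lemma tight_simple {H : SimpleGraph W} {T : SimpleGraph ι} {B : ι → Set W} {k : ℕ}
    (hpre : Pre H T B k) (htight : ∀ s t : ι, T.Adj s t → ¬ B s ⊆ B t) :
    ∀ X : Set W, X.ncard = k → ∀ t₁ t₂ t₃ : ι,
      X ⊆ B t₁ → X ⊆ B t₂ → X ⊆ B t₃ → t₁ = t₂ ∨ t₁ = t₃ ∨ t₂ = t₃ := by
  classical
  have hcoh := coh_of_walkCoh hpre.acyc hpre.coh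
  intro X hX t₁ t₂ t₃ h₁ h₂ h₃
  by_contra hcon
  push_neg at hcon
  obtain ⟨h12, h13, h23⟩ := hcon
  have memS : ∀ {a b : ι} (p : T.Walk a b), p.IsPath → X ⊆ B a → X ⊆ B b →
      ∀ x ∈ p.support, X ⊆ B x := by
    intro a b p hp ha hb x hx w hw
    exact hcoh w a b (ha hw) (hb hw) p hp x hx
  obtain ⟨q, hq⟩ := exists_path hpre.conn t₁ t₂
  cases q with
  | nil => exact h12 rfl
  | @cons _ u _ hadj q₂ =>
    cases q₂ with
    | nil =>
      -- t₁ adjacent to t₂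
      obtain ⟨r, hr⟩ := exists_path hpre.conn t₁ t₃
      cases r with
      | nil => exact h13 rfl
      | @cons _ u' _ hadj₂ r₂ =>
        by_cases hu : u' = t₂
        · subst hu
          cases r₂ with
          | nil => exact h23 rfl
          | @cons _ u₂ _ hadj₃ r₃ =>
            have hu₂ : t₁ ≠ u₂ := by
              intro hh
              have := (Walk.cons_isPath_iff _ _).mp hr
              apply this.2
              rw [Walk.support_cons, List.mem_cons]
              exact Or.inr (hh ▸ r₃.start_mem_support)
            have hXu₂ : X ⊆ B u₂ := by
              refine memS _ hr h₁ h₃ u₂ ?_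
              rw [Walk.support_cons, Walk.support_cons]
              simp [r₃.start_mem_support]
            have hBt₂ := hpre.c1 X hX u' t₁ u₂ hu₂ hadj₂.symm hadj₃ h₂ h₁ hXu₂
            exact htight u' t₁ hadj₂.symm (by rw [hBt₂]; exact h₁)
        · have hXu' : X ⊆ B u' := by
            refine memS _ hr h₁ h₃ u' ?_
            rw [Walk.support_cons]
            simp [r₂.start_mem_support]
          have hBt₁ := hpre.c1 X hX t₁ u' t₂ hu hadj₂ hadj h₁ hXu' h₂
          exact htight t₁ t₂ hadj (by rw [hBt₁]; exact h₂)
    | @cons _ u₂ _ hadj₂' q₃ =>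
      have ht₁ : t₁ ∉ (Walk.cons hadj₂' q₃).support := ((Walk.cons_isPath_iff _ _).mp hq).2
      have hu₂ : t₁ ≠ u₂ := by
        intro hh
        apply ht₁
        rw [Walk.support_cons, List.mem_cons]
        exact Or.inr (hh ▸ q₃.start_mem_support)
      have hXu : X ⊆ B u := by
        refine memS _ hq h₁ h₂ u ?_
        rw [Walk.support_cons]
        simp
      have hXu₂ : X ⊆ B u₂ := by
        refine memS _ hq h₁ h₂ u₂ ?_
        rw [Walk.support_cons, Walk.support_cons]
        simp [q₃.start_mem_support]
      have hBu := hpre.c1 X hX u t₁ u₂ hu₂ hadj.symm hadj₂' hXu h₁ hXu₂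
      exact htight u t₁ hadj.symm (by rw [hBu]; exact h₁)

lemma tighten [Fintype W] (H : SimpleGraph W) (k : ℕ) :
    ∀ (n : ℕ) (ι : Type) (_ : Fintype ι) (T : SimpleGraph ι) (B : ι → Set W),
      Fintype.card ι ≤ n → Pre H T B k →
      ∃ (ι₂ : Type) (T₂ : SimpleGraph ι₂) (B₂ : ι₂ → Set W),
        IsTreeDecomp H T₂ B₂ ∧ (∀ t, (B₂ t).ncard ≤ k + 1) ∧
        (∀ X : Set W, X.ncard = k → ∀ t₁ t₂ t₃ : ι₂,
          X ⊆ B₂ t₁ → X ⊆ B₂ t₂ → X ⊆ B₂ t₃ → t₁ = t₂ ∨ t₁ = t₃ ∨ t₂ = t₃) := by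
  intro n
  induction n with
  | zero =>
    intro ι inst T B hcard hpre
    exfalso
    have h1 : Nonempty ι := hpre.conn.nonempty
    have h2 : 0 < Fintype.card ι := @Fintype.card_pos ι inst h1
    omega
  | succ n ih =>
    intro ι inst T B hcard hpre
    by_cases hex : ∃ s t : ι, T.Adj s t ∧ B s ⊆ B t
    · obtain ⟨s, t, hst, hsub⟩ := hex
      have : DecidableEq ι := Classical.decEq ι
      have hpre' := contract hpre hst hsub
      have hlt : Fintype.card {x : ι // x ≠ s} < Fintype.card ι := by
        apply Fintype.card_subtype_lt (x := s)
        simp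
      exact ih {x : ι // x ≠ s} _ (CG T s t) (fun x => B ↑x) (by omega) hpre'
    · push_neg at hex
      exact ⟨ι, T, B,
        ⟨hpre.conn, hpre.acyc, hpre.cover, coh_of_walkCoh hpre.acyc hpre.coh, hpre.edge⟩,
        hpre.width, tight_simple hpre hex⟩

/-! ### The trivial decomposition -/

lemma trivial_mem [Fintype V] (G : SimpleGraph V) :
    (Fintype.card V) ∈ { k | ∃ (ι : Type) (T : SimpleGraph ι) (B : ι → Set V),
      IsTreeDecomp G T B ∧ (∀ t, (B t).ncard ≤ k + 1) ∧
      (∀ X : Set V, X.ncard = k → ∀ t₁ t₂ t₃ : ι,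
        X ⊆ B t₁ → X ⊆ B t₂ → X ⊆ B t₃ → t₁ = t₂ ∨ t₁ = t₃ ∨ t₂ = t₃) } := by
  refine ⟨Unit, ⊥, fun _ => Set.univ, ⟨?_, ?_, ?_, ?_, ?_⟩, ?_, ?_⟩
  · exact (connected_iff _).mpr ⟨fun u v => by rw [Subsingleton.elim u v], ⟨()⟩⟩
  · intro v c hc
    cases c with
    | nil => exact hc.ne_nil rfl
    | cons h _ => exact h.elim
  · exact fun v => ⟨(), Set.mem_univ v⟩
  · exact fun v t₁ t₂ _ _ p _ t _ => Set.mem_univ v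
  · exact fun u v _ => ⟨(), Set.mem_univ u, Set.mem_univ v⟩
  · intro t
    rw [Set.ncard_univ, Nat.card_eq_fintype_card]
    omega
  · intro X _ t₁ t₂ t₃ _ _ _
    exact Or.inl (Subsingleton.elim t₁ t₂)

end StwAux

theorem stw_minor_monotone
    {W V : Type} [Fintype W] [Fintype V] (H : SimpleGraph W) (G : SimpleGraph V)
    (h : IsMinor H G) :
    stw H ≤ stw G := by
  classical
  obtain ⟨f, hne, hconn, hdisj, hedge⟩ := h
  have hSG : { k | ∃ (ι : Type) (T : SimpleGraph ι) (B : ι → Set V),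
      IsTreeDecomp G T B ∧ (∀ t, (B t).ncard ≤ k + 1) ∧
      (∀ X : Set V, X.ncard = k → ∀ t₁ t₂ t₃ : ι,
        X ⊆ B t₁ → X ⊆ B t₂ → X ⊆ B t₃ → t₁ = t₂ ∨ t₁ = t₃ ∨ t₂ = t₃) }.Nonempty :=
    ⟨_, StwAux.trivial_mem G⟩
  have hmem := Nat.sInf_mem hSG
  obtain ⟨ι, T, B, hTD, hwidth, hsimp⟩ := hmem
  have hpre := StwAux.pullback H G hne hconn hdisj hedge hTD hwidth hsimp
  obtain ⟨ι₂, fin₂, T₂, B₂, hpre₂⟩ := StwAux.shrink hpre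
  obtain ⟨ι₃, T₃, B₃, h1, h2, h3⟩ :=
    StwAux.tighten H (stw G) (Fintype.card ι₂) ι₂ fin₂ T₂ B₂ le_rfl hpre₂
  exact Nat.sInf_le ⟨ι₃, T₃, B₃, h1, h2, h3⟩
end

section
/- Let G be a connected chordal graph with BFS-layering (L_0, L_1, …) from a root, and let H be a connected component of the subgraph induced on the union of layers L_j with j ≥ i, for some i ≥ 1. Then the set of neighbors of V(H) contained in L_{i−1} (the shadow of H) is a clique in G. -/
open SimpleGraph

/-- A graph is chordal if every cycle of length at least 4 has a chord. -/
def IsChordal {V : Type} (G : SimpleGraph V) : Prop :=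
  ∀ (v : V) (c : G.Walk v v), c.IsCycle → 4 ≤ c.length →
    ∃ u w, u ∈ c.support ∧ w ∈ c.support ∧ G.Adj u w ∧ s(u, w) ∉ c.edges

private lemma two_le_length {V : Type} {G : SimpleGraph V} {a b : V} (p : G.Walk a b)
    (hne : a ≠ b) (he : s(a, b) ∉ p.edges) : 2 ≤ p.length := by
  cases p with
  | nil => exact absurd rfl hne
  | cons h q =>
    cases q with
    | nil => simp at he
    | cons h' q' =>
      simp only [Walk.length_cons]
      omega

private lemma exists_shorter {V : Type} {G : SimpleGraph V} [DecidableEq V] {u w a b : V}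
    (p : G.Walk u w) (hp : p.IsPath) (ha : a ∈ p.support) (hb : b ∈ p.support)
    (hab : G.Adj a b) (he : s(a, b) ∉ p.edges) :
    ∃ q : G.Walk u w, q.IsPath ∧ q.length < p.length ∧ ∀ v ∈ q.support, v ∈ p.support := by
  have hspec := p.take_spec ha
  have hlen : (p.takeUntil a ha).length + (p.dropUntil a ha).length = p.length := by
    have := congrArg Walk.length hspec
    rwa [Walk.length_append] at this
  by_cases hb2 : b ∈ (p.dropUntil a ha).support
  · have hlen2 : ((p.dropUntil a ha).takeUntil b hb2).length
        + ((p.dropUntil a ha).dropUntil b hb2).length = (p.dropUntil a ha).length := by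
      have := congrArg Walk.length ((p.dropUntil a ha).take_spec hb2)
      rwa [Walk.length_append] at this
    have h2 : 2 ≤ ((p.dropUntil a ha).takeUntil b hb2).length := by
      refine two_le_length _ hab.ne fun hmem => he ?_
      exact Walk.edges_dropUntil_subset p ha (Walk.edges_takeUntil_subset _ hb2 hmem)
    set W : G.Walk u w :=
      (p.takeUntil a ha).append (Walk.cons hab ((p.dropUntil a ha).dropUntil b hb2)) with hW
    have hWlen : W.length = (p.takeUntil a ha).length
        + (((p.dropUntil a ha).dropUntil b hb2).length + 1) := by
      rw [hW, Walk.length_append, Walk.length_cons]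
    refine ⟨W.bypass, W.bypass_isPath, ?_, ?_⟩
    · have := W.length_bypass_le
      omega
    · intro v hv
      have hv' := W.support_bypass_subset hv
      rw [hW, Walk.mem_support_append_iff] at hv'
      rcases hv' with h | h
      · exact Walk.support_takeUntil_subset p ha h
      · rw [Walk.support_cons, List.mem_cons] at h
        rcases h with rfl | h
        · exact ha
        · exact Walk.support_dropUntil_subset p ha (Walk.support_dropUntil_subset _ hb2 h)
  · have hb1 : b ∈ (p.takeUntil a ha).support := by
      rw [← hspec, Walk.mem_support_append_iff] at hb
      exact hb.resolve_right hb2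
    have hlen1 : ((p.takeUntil a ha).takeUntil b hb1).length
        + ((p.takeUntil a ha).dropUntil b hb1).length = (p.takeUntil a ha).length := by
      have := congrArg Walk.length ((p.takeUntil a ha).take_spec hb1)
      rwa [Walk.length_append] at this
    have h2 : 2 ≤ ((p.takeUntil a ha).dropUntil b hb1).length := by
      refine two_le_length _ hab.ne' fun hmem => he ?_
      rw [Sym2.eq_swap]
      exact Walk.edges_takeUntil_subset p ha (Walk.edges_dropUntil_subset _ hb1 hmem)
    set W : G.Walk u w :=
      ((p.takeUntil a ha).takeUntil b hb1).append (Walk.cons hab.symm (p.dropUntil a ha)) with hW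
    have hWlen : W.length = ((p.takeUntil a ha).takeUntil b hb1).length
        + ((p.dropUntil a ha).length + 1) := by
      rw [hW, Walk.length_append, Walk.length_cons]
    refine ⟨W.bypass, W.bypass_isPath, ?_, ?_⟩
    · have := W.length_bypass_le
      omega
    · intro v hv
      have hv' := W.support_bypass_subset hv
      rw [hW, Walk.mem_support_append_iff] at hv'
      rcases hv' with h | h
      · exact Walk.support_takeUntil_subset p ha (Walk.support_takeUntil_subset _ hb1 h)
      · rw [Walk.support_cons, List.mem_cons] at h
        rcases h with rfl | h
        · exact hb
        · exact Walk.support_dropUntil_subset p ha h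

theorem shadow_isClique
    {V : Type} [Fintype V] (G : SimpleGraph V) (hG : G.Connected) (hch : IsChordal G)
    (root : V) (i : ℕ) (hi : 1 ≤ i) (C : Set V)
    (hCsub : C ⊆ {v | i ≤ G.dist root v})
    (hCconn : (G.induce C).Connected)
    (hCmax : ∀ u ∈ C, ∀ v, i ≤ G.dist root v → G.Adj u v → v ∈ C) :
    G.IsClique {u | G.dist root u = i - 1 ∧ ∃ v ∈ C, G.Adj u v} := by
  classical
  rw [SimpleGraph.isClique_iff]
  intro u hu w hw hne
  obtain ⟨hdu, x, hxC, hux⟩ := hu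
  obtain ⟨hdw, y, hyC, hwy⟩ := hw
  by_contra hnadj
  -- the case i = 1 is degenerate
  have hi2 : 2 ≤ i := by
    rcases Nat.lt_or_ge i 2 with h | h
    · exfalso
      have h1 : i = 1 := by omega
      subst h1
      simp only [Nat.sub_self] at hdu hdw
      have h2 : root = u := hG.dist_eq_zero_iff.mp hdu
      have h3 : root = w := hG.dist_eq_zero_iff.mp hdw
      exact hne (h2 ▸ h3)
    · exact h
  -- existence of a u-w path with interior inside C
  have hexP : ∃ n, ∃ p : G.Walk u w, p.IsPath ∧
      (∀ v ∈ p.support, v = u ∨ v = w ∨ v ∈ C) ∧ p.length = n := by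
    obtain ⟨q⟩ := hCconn.preconnected ⟨x, hxC⟩ ⟨y, hyC⟩
    let q' : G.Walk x y := q.map (SimpleGraph.Embedding.induce C).toHom
    have hq'supp : ∀ v ∈ q'.support, v ∈ C := by
      intro v hv
      rw [show q'.support = _ from Walk.support_map _ _, List.mem_map] at hv
      obtain ⟨⟨v', hv'⟩, _, rfl⟩ := hv
      exact hv'
    set W0 : G.Walk u w := Walk.cons hux (q'.concat hwy.symm) with hW0
    refine ⟨W0.bypass.length, W0.bypass, W0.bypass_isPath, ?_, rfl⟩
    intro v hv
    have hv' := W0.support_bypass_subset hv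
    rw [hW0, Walk.support_cons, List.mem_cons] at hv'
    rcases hv' with rfl | hv'
    · exact Or.inl rfl
    · rw [Walk.support_concat, List.mem_append] at hv'
      rcases hv' with hv' | hv'
      · exact Or.inr (Or.inr (hq'supp v hv'))
      · rw [List.mem_singleton] at hv'
        exact Or.inr (Or.inl hv')
  -- vertices on a shortest walk from the root to layer i-1
  have key : ∀ (z : V) (p : G.Walk root z), p.length = i - 1 →
      ∀ v ∈ p.support, v = z ∨ G.dist root v + 2 ≤ i := by
    intro z p hplen v hv
    by_cases hvz : v = z
    · exact Or.inl hvz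
    · right
      have h1 : (p.takeUntil v hv).length + (p.dropUntil v hv).length = p.length := by
        have := congrArg Walk.length (p.take_spec hv)
        rwa [Walk.length_append] at this
      have h2 : G.dist root v ≤ (p.takeUntil v hv).length := SimpleGraph.dist_le _
      have h3 : (p.dropUntil v hv).length ≠ 0 := fun h0 => hvz (Walk.eq_of_length_eq_zero h0)
      omega
  -- existence of a u-w path with interior in layers ≤ i-2
  have hexS : ∃ n, ∃ p : G.Walk u w, p.IsPath ∧
      (∀ v ∈ p.support, v = u ∨ v = w ∨ G.dist root v + 2 ≤ i) ∧ p.length = n := by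
    obtain ⟨p1, hp1⟩ := (hG.preconnected root u).exists_walk_length_eq_dist
    obtain ⟨p2, hp2⟩ := (hG.preconnected root w).exists_walk_length_eq_dist
    set W0 : G.Walk u w := p1.reverse.append p2 with hW0
    refine ⟨W0.bypass.length, W0.bypass, W0.bypass_isPath, ?_, rfl⟩
    intro v hv
    have hv' := W0.support_bypass_subset hv
    rw [hW0, Walk.mem_support_append_iff, Walk.support_reverse, List.mem_reverse] at hv'
    rcases hv' with h | h
    · rcases key u p1 (hp1.trans hdu) v h with h' | h'
      · exact Or.inl h'
      · exact Or.inr (Or.inr h')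
    · rcases key w p2 (hp2.trans hdw) v h with h' | h'
      · exact Or.inr (Or.inl h')
      · exact Or.inr (Or.inr h')
  -- minimal such paths
  obtain ⟨P, hPpath, hPprop, hPlen⟩ := Nat.find_spec hexP
  obtain ⟨S, hSpath, hSprop, hSlen⟩ := Nat.find_spec hexS
  have hPmem : ∀ v ∈ P.support, v = u ∨ v = w ∨ i ≤ G.dist root v := by
    intro v hv
    rcases hPprop v hv with h | h | h
    exacts [Or.inl h, Or.inr (Or.inl h), Or.inr (Or.inr (hCsub h))]
  have hcommon : ∀ v, v ∈ P.support → v ∈ S.support → v = u ∨ v = w := by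
    intro v hvP hvS
    rcases hPmem v hvP with h | h | h
    · exact Or.inl h
    · exact Or.inr h
    · rcases hSprop v hvS with h' | h' | h'
      · exact Or.inl h'
      · exact Or.inr h'
      · omega
  have hPedge : s(u, w) ∉ P.edges := fun h => hnadj (P.adj_of_mem_edges h)
  have hSedge : s(u, w) ∉ S.edges := fun h => hnadj (S.adj_of_mem_edges h)
  have hPlen2 : 2 ≤ P.length := two_le_length P hne hPedge
  have hSlen2 : 2 ≤ S.length := two_le_length S hne hSedge
  -- the closed walk P followed by reverse of S is a cycle
  have hedgedisj : P.edges.Disjoint S.reverse.edges := by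
    intro e heP heS
    rw [Walk.edges_reverse, List.mem_reverse] at heS
    revert heP heS
    induction e using Sym2.ind with
    | _ c d =>
      intro heP heS
      have hcP := P.fst_mem_support_of_mem_edges heP
      have hdP := P.snd_mem_support_of_mem_edges heP
      have hcS := S.fst_mem_support_of_mem_edges heS
      have hdS := S.snd_mem_support_of_mem_edges heS
      have hcd : G.Adj c d := P.adj_of_mem_edges heP
      rcases hcommon c hcP hcS with rfl | rfl <;> rcases hcommon d hdP hdS with rfl | rfl
      · exact hcd.ne rfl
      · exact hnadj hcd
      · exact hnadj hcd.symm
      · exact hcd.ne rfl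
  have hZtrail : (P.append S.reverse).IsTrail := by
    rw [Walk.isTrail_def, Walk.edges_append]
    exact List.Nodup.append hPpath.isTrail.edges_nodup hSpath.reverse.isTrail.edges_nodup hedgedisj
  have hstn : (P.append S.reverse).support.tail.Nodup := by
    rw [Walk.tail_support_append]
    refine List.Nodup.append ?_ ?_ ?_
    · have := hPpath.support_nodup
      rw [P.support_eq_cons] at this
      exact (List.nodup_cons.mp this).2
    · have := hSpath.reverse.support_nodup
      rw [S.reverse.support_eq_cons] at this
      exact (List.nodup_cons.mp this).2
    · intro v hvP hvS
      have hvP' : v ∈ P.support := List.mem_of_mem_tail hvP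
      have hvS' : v ∈ S.support := by
        have h := List.mem_of_mem_tail hvS
        rwa [Walk.support_reverse, List.mem_reverse] at h
      have hvu : v ≠ u := by
        rintro rfl
        have h := hPpath.support_nodup
        rw [P.support_eq_cons] at h
        exact (List.nodup_cons.mp h).1 hvP
      have hvw : v ≠ w := by
        rintro rfl
        have h := hSpath.reverse.support_nodup
        rw [S.reverse.support_eq_cons] at h
        exact (List.nodup_cons.mp h).1 hvS
      rcases hcommon v hvP' hvS' with h | h
      exacts [hvu h, hvw h]
  have hZne : P.append S.reverse ≠ Walk.nil := by
    intro h
    have h0 : (P.append S.reverse).length = 0 := by rw [h]; rfl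
    rw [Walk.length_append, Walk.length_reverse] at h0
    omega
  have hZcyc : (P.append S.reverse).IsCycle := ⟨⟨hZtrail, hZne⟩, hstn⟩
  have hZlen4 : 4 ≤ (P.append S.reverse).length := by
    rw [Walk.length_append, Walk.length_reverse]
    omega
  obtain ⟨a, b, haZ, hbZ, hab, hchord⟩ := hch u (P.append S.reverse) hZcyc hZlen4
  rw [Walk.mem_support_append_iff, Walk.support_reverse, List.mem_reverse] at haZ hbZ
  rw [Walk.edges_append, List.mem_append] at hchord
  push_neg at hchord
  obtain ⟨hchP, hchS'⟩ := hchord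
  rw [Walk.edges_reverse, List.mem_reverse] at hchS'
  -- no chord can have both ends on P, nor both ends on S, by minimality
  have noP : ¬(a ∈ P.support ∧ b ∈ P.support) := by
    rintro ⟨haP, hbP⟩
    obtain ⟨q, hq, hqlen, hqsupp⟩ := exists_shorter P hPpath haP hbP hab hchP
    exact Nat.find_min hexP (hPlen ▸ hqlen) ⟨q, hq, fun v hv => hPprop v (hqsupp v hv), rfl⟩
  have noS : ¬(a ∈ S.support ∧ b ∈ S.support) := by
    rintro ⟨haS, hbS⟩
    obtain ⟨q, hq, hqlen, hqsupp⟩ := exists_shorter S hSpath haS hbS hab hchS'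
    exact Nat.find_min hexS (hSlen ▸ hqlen) ⟨q, hq, fun v hv => hSprop v (hqsupp v hv), rfl⟩
  have hdist : ∀ c d : V, G.Adj c d → G.dist root c ≤ G.dist root d + 1 := by
    intro c d hcd
    have h1 : G.dist root c ≤ G.dist root d + G.dist d c := hG.dist_triangle
    have h2 : G.dist d c ≤ 1 := by
      have := SimpleGraph.dist_le (Walk.cons hcd.symm Walk.nil)
      simpa using this
    omega
  rcases haZ with haP | haS
  · rcases hbZ with hbP | hbS
    · exact noP ⟨haP, hbP⟩
    · by_cases haS : a ∈ S.support
      · exact noS ⟨haS, hbS⟩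
      by_cases hbP : b ∈ P.support
      · exact noP ⟨haP, hbP⟩
      have hia : i ≤ G.dist root a := by
        rcases hPmem a haP with rfl | rfl | h
        · exact absurd S.start_mem_support haS
        · exact absurd S.end_mem_support haS
        · exact h
      have hib : G.dist root b + 2 ≤ i := by
        rcases hSprop b hbS with rfl | rfl | h
        · exact absurd P.start_mem_support hbP
        · exact absurd P.end_mem_support hbP
        · exact h
      have := hdist a b hab
      omega
  · rcases hbZ with hbP | hbS
    · by_cases hbS : b ∈ S.support
      · exact noS ⟨haS, hbS⟩
      by_cases haP : a ∈ P.support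
      · exact noP ⟨haP, hbP⟩
      have hib : i ≤ G.dist root b := by
        rcases hPmem b hbP with rfl | rfl | h
        · exact absurd S.start_mem_support hbS
        · exact absurd S.end_mem_support hbS
        · exact h
      have hia : G.dist root a + 2 ≤ i := by
        rcases hSprop a haS with rfl | rfl | h
        · exact absurd P.start_mem_support haP
        · exact absurd P.end_mem_support haP
        · exact h
      have := hdist b a hab.symm
      omega
    · exact noS ⟨haS, hbS⟩
end

section
/- Define g(0,k) = 1 for all k ≥ 1, g(r,1) = ⌈log₂ r⌉ + 1 for r ≥ 1, and g(r,k) = Σ_{i=0}^{r} g(i, k−1) for r ≥ 1, k ≥ 2. Then g(r,k) ≥ r^{k−1} ln(r) / k! for all integers r, k ≥ 1. -/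
open SimpleGraph

lemma key_pow_ineq (r m : ℕ) : (r+1)^(m+1) ≤ (m+1)*(r+1)^m + r^(m+1) := by
  induction m with
  | zero => simpa using by omega
  | succ m ih =>
    have hrp : r^(m+1) ≤ (r+1)^(m+1) := Nat.pow_le_pow_left (by omega) _
    calc (r+1)^(m+2) = (r+1)^(m+1) * (r+1) := by ring
      _ ≤ ((m+1)*(r+1)^m + r^(m+1)) * (r+1) := Nat.mul_le_mul_right _ ih
      _ = (m+1)*(r+1)^(m+1) + (r^(m+1)*r + r^(m+1)) := by ring
      _ ≤ (m+1)*(r+1)^(m+1) + (r^(m+2) + (r+1)^(m+1)) := by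
          have : r^(m+1)*r = r^(m+2) := by ring
          omega
      _ = (m+2)*(r+1)^(m+1) + r^(m+2) := by ring

lemma sum_pow_log (m : ℕ) (r : ℕ) :
    (r:ℝ)^(m+1) * Real.log r / (m+2) ≤
      ∑ i ∈ Finset.range (r+1), (i:ℝ)^m * Real.log i := by
  induction r with
  | zero => simp
  | succ r ih =>
    rw [Finset.sum_range_succ]
    rcases Nat.lt_or_ge r 2 with h | h
    · interval_cases r
      · simp
      · rw [Finset.sum_range_succ, Finset.sum_range_one]
        push_cast
        have hlog2 : 0 ≤ Real.log 2 := Real.log_nonneg (by norm_num)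
        have h2 : (0:ℝ) < (2:ℝ)^m := by positivity
        rw [Real.log_one, Real.log_zero]
        have he : (2:ℝ)^(m+1) = 2 * 2^m := by ring
        rw [he, div_le_iff₀ (by positivity)]
        have hz : (0:ℝ)^m * 0 + (1:ℝ)^m * 0 = 0 := by ring
        nlinarith [mul_nonneg (mul_nonneg (Nat.cast_nonneg m : (0:ℝ) ≤ m) h2.le) hlog2, hz]
    · -- r ≥ 2
      have hr0 : (0:ℝ) < r := by exact_mod_cast Nat.lt_of_lt_of_le (by norm_num) h
      have hr2 : (2:ℝ) ≤ r := by exact_mod_cast h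
      have hn : ((r:ℝ)+1) = ((r+1 : ℕ) : ℝ) := by push_cast; ring
      have hL : 1 ≤ Real.log ((r:ℝ)+1) := by
        rw [Real.le_log_iff_exp_le (by linarith)]
        have := Real.exp_one_lt_d9
        linarith
      have hl0 : 0 ≤ Real.log r := Real.log_nonneg (by linarith)
      have hlogdiff : Real.log ((r:ℝ)+1) - Real.log r ≤ 1 / r := by
        have hdivpos : (0:ℝ) < ((r:ℝ)+1)/r := by positivity
        have := Real.log_le_sub_one_of_pos hdivpos
        rw [Real.log_div (by linarith) (by linarith)] at this
        have heq : ((r:ℝ)+1)/r - 1 = 1/r := by field_simp; ring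
        linarith [heq ▸ this]
      have hkey : ((r:ℝ)+1)^(m+1) ≤ (m+1)*((r:ℝ)+1)^m + (r:ℝ)^(m+1) := by
        have := key_pow_ineq r m
        exact_mod_cast this
      have hpowle : (r:ℝ)^m ≤ ((r:ℝ)+1)^m := by
        apply pow_le_pow_left₀ (by linarith) (by linarith)
      have hnpm : (0:ℝ) ≤ ((r:ℝ)+1)^m := by positivity
      have hrpm : (0:ℝ) ≤ (r:ℝ)^m := by positivity
      have hrpm1 : (0:ℝ) ≤ (r:ℝ)^(m+1) := by positivity
      rw [← hn]
      have suff : ((r:ℝ)+1)^(m+1) * Real.log ((r:ℝ)+1) / (m+2) ≤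
          (r:ℝ)^(m+1) * Real.log r / (m+2) + ((r:ℝ)+1)^m * Real.log ((r:ℝ)+1) := by
        rw [div_add' _ _ _ (by positivity), div_le_div_iff₀ (by positivity) (by positivity)]
        have e1 : (r:ℝ)^(m+1) * (Real.log ((r:ℝ)+1) - Real.log r) ≤ (r:ℝ)^(m+1) * (1/r) :=
          mul_le_mul_of_nonneg_left hlogdiff hrpm1
        have e2 : (r:ℝ)^(m+1) * (1/r) = (r:ℝ)^m := by
          rw [pow_succ]; field_simp
        have e3 : ((r:ℝ)+1)^(m+1) * Real.log ((r:ℝ)+1) ≤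
            ((m+1)*((r:ℝ)+1)^m + (r:ℝ)^(m+1)) * Real.log ((r:ℝ)+1) :=
          mul_le_mul_of_nonneg_right hkey (by linarith)
        have e4 : (r:ℝ)^m ≤ ((r:ℝ)+1)^m * Real.log ((r:ℝ)+1) := by
          calc (r:ℝ)^m ≤ ((r:ℝ)+1)^m := hpowle
            _ = ((r:ℝ)+1)^m * 1 := by ring
            _ ≤ ((r:ℝ)+1)^m * Real.log ((r:ℝ)+1) :=
                mul_le_mul_of_nonneg_left hL hnpm
        nlinarith [e1, e3, e4, mul_nonneg hrpm1 hl0]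
      have := ih
      push_cast at suff ⊢
      linarith

theorem g_lower_bound (g : ℕ → ℕ → ℕ)
    (h0 : ∀ k, 1 ≤ k → g 0 k = 1)
    (h1 : ∀ r, 1 ≤ r → g r 1 = Nat.clog 2 r + 1)
    (hrec : ∀ r k, 1 ≤ r → 2 ≤ k → g r k = ∑ i ∈ Finset.range (r + 1), g i (k - 1)) :
    ∀ r k : ℕ, 1 ≤ r → 1 ≤ k →
      (r : ℝ) ^ (k - 1) * Real.log (r : ℝ) / (Nat.factorial k) ≤ (g r k : ℝ) := by
  have main : ∀ k : ℕ, 1 ≤ k → ∀ r : ℕ, 1 ≤ r →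
      (r : ℝ) ^ (k - 1) * Real.log (r : ℝ) / (Nat.factorial k) ≤ (g r k : ℝ) := by
    intro k hk
    induction k, hk using Nat.le_induction with
    | base =>
      intro r hr
      simp only [Nat.factorial_one, Nat.cast_one, div_one, Nat.sub_self, pow_zero, one_mul]
      rw [h1 r hr]
      have h2 : (r : ℝ) ≤ (2:ℝ) ^ (Nat.clog 2 r) := by
        exact_mod_cast Nat.le_pow_clog (by norm_num) r
      have hr0 : (0:ℝ) < r := by exact_mod_cast hr
      calc Real.log r ≤ Real.log ((2:ℝ) ^ (Nat.clog 2 r)) :=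
            Real.log_le_log hr0 h2
        _ = (Nat.clog 2 r) * Real.log 2 := by rw [Real.log_pow]
        _ ≤ (Nat.clog 2 r) * 1 := by
            apply mul_le_mul_of_nonneg_left _ (by positivity)
            have := Real.log_two_lt_d9
            linarith
        _ ≤ ((Nat.clog 2 r : ℝ)) + 1 := by linarith
        _ = ((Nat.clog 2 r + 1 : ℕ) : ℝ) := by push_cast; ring
    | succ k hk ih =>
      intro r hr
      rw [hrec r (k+1) hr (by omega)]
      simp only [Nat.add_sub_cancel]
      obtain ⟨m, rfl⟩ : ∃ m, k = m + 1 := ⟨k - 1, by omega⟩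
      -- exponent: (m+2)-1 = m+1
      have hterm : ∀ i ∈ Finset.range (r+1),
          (i:ℝ)^m * Real.log i / (Nat.factorial (m+1)) ≤ (g i (m+1) : ℝ) := by
        intro i _
        rcases Nat.eq_zero_or_pos i with rfl | hi
        · simp
        · have := ih i hi
          simpa using this
      have hsum := Finset.sum_le_sum hterm
      rw [← Finset.sum_div] at hsum
      have hS := sum_pow_log m r
      have hfac : ((Nat.factorial (m+2) : ℕ) : ℝ) = (m+2) * (Nat.factorial (m+1)) := by
        rw [Nat.factorial_succ]; push_cast; ring
      have hfpos : (0:ℝ) < (Nat.factorial (m+1) : ℝ) := by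
        exact_mod_cast Nat.factorial_pos (m+1)
      calc (r:ℝ)^(m+2-1) * Real.log r / (Nat.factorial (m+2))
          = ((r:ℝ)^(m+1) * Real.log r / (m+2)) / (Nat.factorial (m+1)) := by
            rw [hfac, show m+2-1 = m+1 from rfl]; field_simp
        _ ≤ (∑ i ∈ Finset.range (r+1), (i:ℝ)^m * Real.log i) / (Nat.factorial (m+1)) := by
            gcongr
        _ ≤ ∑ i ∈ Finset.range (r+1), (g i (m+1) : ℝ) := hsum
        _ = ((∑ i ∈ Finset.range (r+1), g i (m+1) : ℕ) : ℝ) := by push_cast; ring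
  intro r k hr hk
  exact main k hk r hr
end

section
/- Let G be a connected chordal graph with BFS-layering (L_0, L_1, …). If P is a shortest path among all v–w paths witnessing that w is weakly r-reachable from v (where v ∈ L_i, w ∈ L_j, j ≤ i), then P contains no vertex of any layer L_{j'} with j' < j, and once P enters layer L_j it remains in L_j. -/
open SimpleGraph

namespace ChordalAux

variable {V : Type} {G : SimpleGraph V}

lemma getVert_mem_support (p : G.Walk v w) {k : ℕ} (hk : k ≤ p.length) :
    p.getVert k ∈ p.support :=
  Walk.mem_support_iff_exists_getVert.mpr ⟨k, rfl, hk⟩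

lemma edge_getVert_succ (p : G.Walk v w) {k : ℕ} (hk : k < p.length) :
    s(p.getVert k, p.getVert (k + 1)) ∈ p.edges := by
  induction p generalizing k with
  | nil => simp at hk
  | cons h q ih =>
    cases k with
    | zero =>
      simp only [Walk.getVert_zero, Walk.edges_cons, show (0:ℕ)+1 = 1 from rfl,
        Walk.getVert_cons q h (n := 1) one_ne_zero, show (1:ℕ) - 1 = 0 from rfl]
      exact List.mem_cons_self
    | succ k =>
      simp only [Walk.getVert_cons_succ, Walk.edges_cons]
      exact List.mem_cons_of_mem _ (ih (by simpa using Nat.succ_lt_succ_iff.mp hk))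

lemma IsPath.getVert_ne {p : G.Walk v w} (hp : p.IsPath) {a b : ℕ} (hab : a < b)
    (hb : b ≤ p.length) : p.getVert a ≠ p.getVert b := by
  induction p generalizing a b with
  | nil => simp at hb; omega
  | cons h q ih =>
    rw [Walk.cons_isPath_iff] at hp
    cases a with
    | zero =>
      obtain ⟨b, rfl⟩ : ∃ b', b = b' + 1 := ⟨b - 1, by omega⟩
      rw [Walk.getVert_zero, Walk.getVert_cons_succ]
      intro hmem
      exact hp.2 (hmem ▸ getVert_mem_support q (by simpa using hb))
    | succ a =>
      obtain ⟨b, rfl⟩ : ∃ b', b = b' + 1 := ⟨b - 1, by omega⟩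
      rw [Walk.getVert_cons_succ, Walk.getVert_cons_succ]
      exact ih hp.1 (by omega) (by simpa using hb)

lemma exists_segment (p : G.Walk v w) (a b : ℕ) (hab : a ≤ b) (hb : b ≤ p.length) :
    ∃ q : G.Walk (p.getVert a) (p.getVert b), q.length = b - a ∧
      ∀ z ∈ q.support, ∃ m, a ≤ m ∧ m ≤ b ∧ p.getVert m = z := by
  induction b, hab using Nat.le_induction with
  | base =>
    refine ⟨Walk.nil, by simp, fun z hz => ⟨a, le_rfl, le_rfl, ?_⟩⟩
    rw [Walk.support_nil, List.mem_singleton] at hz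
    exact hz.symm
  | succ b hab ih =>
    obtain ⟨q, hql, hqs⟩ := ih (by omega)
    refine ⟨q.concat (p.adj_getVert_succ (by omega)), ?_, ?_⟩
    · rw [Walk.length_concat]; omega
    · intro z hz
      rw [Walk.support_concat, List.mem_append] at hz
      rcases hz with hz | hz
      · obtain ⟨m, h1, h2, h3⟩ := hqs z hz
        exact ⟨m, h1, by omega, h3⟩
      · exact ⟨b + 1, by omega, le_rfl, (List.mem_singleton.mp hz).symm⟩

lemma exists_min_good {x y : V} (S : V → Prop)
    (h : ∃ q : G.Walk x y, ∀ z ∈ q.support, z = x ∨ z = y ∨ S z) :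
    ∃ P : G.Walk x y, P.IsPath ∧ (∀ z ∈ P.support, z = x ∨ z = y ∨ S z) ∧
      ∀ Q : G.Walk x y, (∀ z ∈ Q.support, z = x ∨ z = y ∨ S z) → P.length ≤ Q.length := by
  classical
  obtain ⟨q, hq⟩ := h
  have hne : ∃ n, ∃ Q : G.Walk x y, (∀ z ∈ Q.support, z = x ∨ z = y ∨ S z) ∧ Q.length = n :=
    ⟨q.length, q, hq, rfl⟩
  obtain ⟨Q, hQ, hQl⟩ := Nat.find_spec hne
  refine ⟨Q.bypass, Q.bypass_isPath, fun z hz => hQ z (Q.support_bypass_subset hz),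
    fun R hR => ?_⟩
  calc Q.bypass.length ≤ Q.length := Q.length_bypass_le
    _ = Nat.find hne := hQl
    _ ≤ R.length := Nat.find_min' hne ⟨R, hR, rfl⟩

lemma min_good_induced {x y : V} (S : V → Prop) (P : G.Walk x y)
    (hGood : ∀ z ∈ P.support, z = x ∨ z = y ∨ S z)
    (hmin : ∀ Q : G.Walk x y, (∀ z ∈ Q.support, z = x ∨ z = y ∨ S z) → P.length ≤ Q.length)
    {u u' : V} (hu : u ∈ P.support) (hu' : u' ∈ P.support) (ha : G.Adj u u') :
    s(u, u') ∈ P.edges := by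
  have claim : ∀ k l : ℕ, k < l → l ≤ P.length → G.Adj (P.getVert k) (P.getVert l) →
      s(P.getVert k, P.getVert l) ∈ P.edges := by
    intro k l hkl hl hadj
    obtain ⟨q1, hq1l, hq1s⟩ := exists_segment P 0 k (Nat.zero_le _) (by omega)
    obtain ⟨q2, hq2l, hq2s⟩ := exists_segment P l P.length hl le_rfl
    set Q : G.Walk x y :=
      (q1.copy P.getVert_zero rfl).append (Walk.cons hadj (q2.copy rfl P.getVert_length)) with hQ
    have hGoodQ : ∀ z ∈ Q.support, z = x ∨ z = y ∨ S z := by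
      intro z hz
      rw [hQ, Walk.mem_support_append_iff] at hz
      have hzP : z ∈ P.support := by
        rcases hz with hz | hz
        · rw [Walk.support_copy] at hz
          obtain ⟨m, _, hm2, hm3⟩ := hq1s z hz
          exact hm3 ▸ getVert_mem_support P (by omega)
        · rw [Walk.support_cons, List.mem_cons] at hz
          rcases hz with hz | hz
          · exact hz ▸ getVert_mem_support P (by omega)
          · rw [Walk.support_copy] at hz
            obtain ⟨m, _, hm2, hm3⟩ := hq2s z hz
            exact hm3 ▸ getVert_mem_support P hm2
      exact hGood z hzP
    have hlenQ : Q.length = k + (1 + (P.length - l)) := by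
      rw [hQ, Walk.length_append, Walk.length_copy, Walk.length_cons, Walk.length_copy]
      omega
    have := hmin Q hGoodQ
    have hlk : l = k + 1 := by omega
    subst hlk
    exact edge_getVert_succ P (by omega)
  obtain ⟨k, hk, hkl⟩ := Walk.mem_support_iff_exists_getVert.mp hu
  obtain ⟨l, hl, hll⟩ := Walk.mem_support_iff_exists_getVert.mp hu'
  subst hk hl
  rcases lt_trichotomy k l with h | h | h
  · exact claim k l h hll ha
  · subst h; exact absurd rfl ha.ne
  · rw [Sym2.eq_swap]
    exact claim l k h hkl ha.symm

end ChordalAux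

namespace ChordalAux2
open ChordalAux

variable {V : Type} {G : SimpleGraph V}

lemma dist_lt_of_mem_shortest {s x : V} (p : G.Walk s x) (hlen : p.length = G.dist s x)
    {z : V} (hz : z ∈ p.support) (hne : z ≠ x) : G.dist s z < G.dist s x := by
  classical
  have h1 : G.dist s z ≤ (p.takeUntil z hz).length := SimpleGraph.dist_le _
  have h2 : 1 ≤ (p.dropUntil z hz).length := by
    by_contra h
    exact hne (Walk.eq_of_length_eq_zero (p := p.dropUntil z hz) (by omega))
  have h3 := congrArg Walk.length (p.take_spec hz)
  rw [Walk.length_append] at h3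
  omega

lemma adj_dist_le (hG : G.Connected) {s u u' : V} (h : G.Adj u u') :
    G.dist s u ≤ G.dist s u' + 1 := by
  have h1 : G.dist u' u ≤ 1 := by
    have := SimpleGraph.dist_le (Walk.cons h.symm Walk.nil)
    simpa using this
  have := hG.dist_triangle (u := s) (v := u') (w := u)
  omega

lemma key (hG : G.Connected) (hch : IsChordal G) (s : V) {j : ℕ} {x y : V}
    (hdx : G.dist s x = j) (hdy : G.dist s y = j) (hxy : x ≠ y)
    (hex : ∃ q : G.Walk x y, ∀ z ∈ q.support, z = x ∨ z = y ∨ j < G.dist s z) :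
    G.Adj x y := by
  classical
  by_contra hna
  -- j ≥ 1
  have hj1 : 1 ≤ j := by
    rcases Nat.eq_zero_or_pos j with h0 | h; swap; · omega
    exact absurd ((hG.dist_eq_zero_iff.mp (h0 ▸ hdx)).symm.trans
      (hG.dist_eq_zero_iff.mp (h0 ▸ hdy))) hxy
  -- minimal walk through upper layers
  obtain ⟨P1, hP1path, hP1good, hP1min⟩ := exists_min_good (fun z => j < G.dist s z) hex
  have hP1len : 2 ≤ P1.length := by
    rcases Nat.lt_or_ge P1.length 2 with h | h; swap; · exact h
    interval_cases h' : P1.length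
    · exact absurd (Walk.eq_of_length_eq_zero h') hxy
    · exact absurd (Walk.adj_of_length_eq_one h') hna
  -- a walk through lower layers exists
  have hdx0 : G.dist s x ≠ 0 := by omega
  have hdy0 : G.dist s y ≠ 0 := by omega
  obtain ⟨px, hpx⟩ := SimpleGraph.exists_walk_of_dist_ne_zero hdx0
  obtain ⟨py, hpy⟩ := SimpleGraph.exists_walk_of_dist_ne_zero hdy0
  have hex2 : ∃ q : G.Walk x y, ∀ z ∈ q.support, z = x ∨ z = y ∨ G.dist s z < j := by
    refine ⟨px.reverse.append py, fun z hz => ?_⟩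
    rw [Walk.mem_support_append_iff] at hz
    rcases hz with hz | hz
    · rw [Walk.support_reverse, List.mem_reverse] at hz
      by_cases hzx : z = x
      · exact Or.inl hzx
      · exact Or.inr (Or.inr (hdx ▸ dist_lt_of_mem_shortest px hpx hz hzx))
    · by_cases hzy : z = y
      · exact Or.inr (Or.inl hzy)
      · exact Or.inr (Or.inr (hdy ▸ dist_lt_of_mem_shortest py hpy hz hzy))
  obtain ⟨P2, hP2path, hP2good, hP2min⟩ := exists_min_good (fun z => G.dist s z < j) hex2
  have hP2len : 2 ≤ P2.length := by
    rcases Nat.lt_or_ge P2.length 2 with h | h; swap; · exact h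
    interval_cases h' : P2.length
    · exact absurd (Walk.eq_of_length_eq_zero h') hxy
    · exact absurd (Walk.adj_of_length_eq_one h') hna
  -- peel the first edge of P2
  cases P2 with
  | nil => simp at hP2len
  | @cons _ z _ hxz P2t =>
    rw [Walk.cons_isPath_iff] at hP2path
    have hzsup : z ∈ P2t.support := P2t.start_mem_support
    have hzx : z ≠ x := fun h => hP2path.2 (h ▸ hzsup)
    have hzy : z ≠ y := by
      intro h
      subst h
      rw [Walk.isPath_iff_eq_nil] at hP2path
      rw [hP2path.1] at hP2len
      simp at hP2len
    have hdz : G.dist s z < j := by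
      rcases hP2good z (by rw [Walk.support_cons]; exact List.mem_cons_of_mem _ hzsup) with
        h | h | h
      · exact absurd h hzx
      · exact absurd h hzy
      · exact h
    -- properties of P2t / P1 supports
    have hP2tgood : ∀ z' ∈ P2t.support, z' = y ∨ G.dist s z' < j := by
      intro z' hz'
      rcases hP2good z' (by rw [Walk.support_cons]; exact List.mem_cons_of_mem _ hz') with
        h | h | h
      · exact absurd (h ▸ hz') hP2path.2
      · exact Or.inl h
      · exact Or.inr h
    have hdisj : ∀ z' ∈ P2t.support, z' ∈ P1.support → z' = y := by
      intro z' h2 h1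
      rcases hP2tgood z' h2 with h | h
      · exact h
      rcases hP1good z' h1 with h' | h' | h'
      · subst h'; omega
      · exact h'
      · omega
    -- the cycle
    set W : G.Walk z x := P2t.append P1.reverse with hW
    have hrevnodup := hP1path.reverse.support_nodup
    have hytail : y ∉ P1.reverse.support.tail := by
      intro h
      rw [Walk.support_eq_cons] at hrevnodup
      exact (List.nodup_cons.mp hrevnodup).1 h
    have hWpath : W.IsPath := by
      rw [Walk.isPath_def, hW, Walk.support_append, List.nodup_append]
      refine ⟨hP2path.1.support_nodup,
        (List.tail_sublist _).nodup hrevnodup, ?_⟩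
      intro z' h2 z'' htl heq
      subst heq
      have h1 : z' ∈ P1.support := by
        rw [← List.mem_reverse, ← Walk.support_reverse]
        exact List.mem_of_mem_tail htl
      exact hytail ((hdisj z' h2 h1) ▸ htl)
    have hcyc : (Walk.cons hxz W).IsCycle := by
      rw [Walk.cons_isCycle_iff]
      refine ⟨hWpath, ?_⟩
      rw [hW, Walk.edges_append, List.mem_append]
      rintro (h | h)
      · exact hP2path.2 (Walk.fst_mem_support_of_mem_edges P2t h)
      · rw [Walk.edges_reverse, List.mem_reverse] at h
        have hzs := Walk.snd_mem_support_of_mem_edges P1 h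
        rcases hP1good z hzs with h' | h' | h'
        · exact hzx h'
        · exact hzy h'
        · omega
    have hP2tlen : 1 ≤ P2t.length := by
      rw [Walk.length_cons] at hP2len; omega
    have hclen : 4 ≤ (Walk.cons hxz W).length := by
      rw [Walk.length_cons, hW, Walk.length_append, Walk.length_reverse]
      omega
    obtain ⟨u, u', hu, hu', hadj, hne⟩ := hch x (Walk.cons hxz W) hcyc hclen
    have hmemP : ∀ t, t ∈ (Walk.cons hxz W).support →
        t ∈ P1.support ∨ t ∈ (Walk.cons hxz P2t).support := by
      intro t ht
      rw [Walk.support_cons, List.mem_cons] at ht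
      rcases ht with rfl | ht
      · exact Or.inr (Walk.start_mem_support _)
      · rw [hW, Walk.mem_support_append_iff] at ht
        rcases ht with ht | ht
        · exact Or.inr (by rw [Walk.support_cons]; exact List.mem_cons_of_mem _ ht)
        · rw [Walk.support_reverse, List.mem_reverse] at ht
          exact Or.inl ht
    have hedge1 : ∀ e ∈ P1.edges, e ∈ (Walk.cons hxz W).edges := by
      intro e he
      rw [Walk.edges_cons, hW, Walk.edges_append]
      exact List.mem_cons_of_mem _ (List.mem_append.mpr (Or.inr
        (by rw [Walk.edges_reverse, List.mem_reverse]; exact he)))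
    have hedge2 : ∀ e ∈ (Walk.cons hxz P2t).edges, e ∈ (Walk.cons hxz W).edges := by
      intro e he
      rw [Walk.edges_cons, List.mem_cons] at he
      rw [Walk.edges_cons, hW, Walk.edges_append]
      rcases he with rfl | he
      · exact List.mem_cons_self
      · exact List.mem_cons_of_mem _ (List.mem_append.mpr (Or.inl he))
    have hsame1 : u ∈ P1.support → u' ∈ P1.support → False := fun h h' =>
      hne (hedge1 _ (min_good_induced _ P1 hP1good hP1min h h' hadj))
    have hsame2 : u ∈ (Walk.cons hxz P2t).support → u' ∈ (Walk.cons hxz P2t).support →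
        False := fun h h' =>
      hne (hedge2 _ (min_good_induced _ (Walk.cons hxz P2t) hP2good hP2min h h' hadj))
    have hcross : ∀ t t' : V, t ∈ P1.support → t' ∈ (Walk.cons hxz P2t).support →
        G.Adj t t' → (t ∈ (Walk.cons hxz P2t).support ∨ t' ∈ P1.support) ∨ False := by
      intro t t' h1 h2 hadj'
      rcases hP1good t h1 with rfl | rfl | hgt
      · exact Or.inl (Or.inl (Walk.start_mem_support _))
      · exact Or.inl (Or.inl (Walk.end_mem_support _))
      rcases hP2good t' h2 with rfl | rfl | hlt
      · exact Or.inl (Or.inr (Walk.start_mem_support _))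
      · exact Or.inl (Or.inr (Walk.end_mem_support _))
      have hd1 := adj_dist_le hG (s := s) hadj'
      omega
    rcases hmemP u hu with h1 | h1 <;> rcases hmemP u' hu' with h2 | h2
    · exact hsame1 h1 h2
    · rcases hcross u u' h1 h2 hadj with (h | h) | h
      · exact hsame2 h h2
      · exact hsame1 h1 h
      · exact h
    · rcases hcross u' u h2 h1 hadj.symm with (h | h) | h
      · exact hsame2 h1 h
      · exact hsame1 h h2
      · exact h
    · exact hsame2 h1 h2

end ChordalAux2

open ChordalAux ChordalAux2

theorem shortest_witnessing_path_layers
    {V : Type} [Fintype V] (G : SimpleGraph V) (hG : G.Connected) (hch : IsChordal G)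
    (s : V) (σ : V → ℕ) (hσ : Function.Injective σ)
    (hlayer : ∀ u w : V, G.dist s u < G.dist s w → σ u < σ w)
    (r i j : ℕ) (v w : V) (hv : G.dist s v = i) (hw : G.dist s w = j) (hji : j ≤ i)
    (p : G.Walk v w) (hp : p.IsPath) (hlen : p.length ≤ r)
    (hwit : ∀ x ∈ p.support, σ w ≤ σ x)
    (hmin : ∀ q : G.Walk v w, q.IsPath → q.length ≤ r →
      (∀ x ∈ q.support, σ w ≤ σ x) → p.length ≤ q.length) :
    (∀ x ∈ p.support, j ≤ G.dist s x) ∧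
    (∀ a b : ℕ, a ≤ b → b ≤ p.length → G.dist s (p.getVert a) = j →
      G.dist s (p.getVert b) = j) := by
  classical
  have partA : ∀ x ∈ p.support, j ≤ G.dist s x := by
    intro x hx
    by_contra h
    have : σ x < σ w := hlayer x w (by omega)
    have := hwit x hx
    omega
  refine ⟨partA, ?_⟩
  intro a b hab hb hda
  by_contra hdb
  have hAk : ∀ k, k ≤ p.length → j ≤ G.dist s (p.getVert k) := fun k hk =>
    partA _ (getVert_mem_support p hk)
  have hdbgt : j < G.dist s (p.getVert b) := lt_of_le_of_ne (hAk b hb) (Ne.symm hdb)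
  have hblt : b < p.length := by
    rcases Nat.lt_or_ge b p.length with h | h
    · exact h
    · have : b = p.length := by omega
      rw [this, Walk.getVert_length] at hdb
      exact absurd hw hdb
  have halt : a < b := by
    rcases Nat.lt_or_ge a b with h | h
    · exact h
    · exact absurd (by omega : a = b) (fun hh => hdb (hh ▸ hda))
  set P : ℕ → Prop := fun k => G.dist s (p.getVert k) = j with hP
  have hPa : P a := hda
  set a' := Nat.findGreatest P b with ha'
  have ha'P : P a' := Nat.findGreatest_spec hab hPa
  have ha'le : a' ≤ b := Nat.findGreatest_le b
  have ha'lt : a' < b := lt_of_le_of_ne ha'le (fun h => hdb (h ▸ ha'P))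
  have hexb : ∃ k, b < k ∧ P k := ⟨p.length, hblt, by rw [hP]; simpa [Walk.getVert_length]⟩
  set b' := Nat.find hexb with hb'
  obtain ⟨hbb', hPb'⟩ := Nat.find_spec hexb
  have hb'le : b' ≤ p.length := Nat.find_min' hexb ⟨hblt, by simpa [hP, Walk.getVert_length]⟩
  have hbetween : ∀ k, a' < k → k < b' → j < G.dist s (p.getVert k) := by
    intro k h1 h2
    have hkle : k ≤ p.length := by omega
    have hge := hAk k hkle
    have hnP : ¬ P k := by
      rcases Nat.lt_or_ge b k with h | h
      · exact fun hPk => Nat.find_min hexb h2 ⟨h, hPk⟩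
      · exact Nat.findGreatest_is_greatest h1 h
    exact lt_of_le_of_ne hge (fun h => hnP h.symm)
  have hxy : p.getVert a' ≠ p.getVert b' := ChordalAux.IsPath.getVert_ne hp (by omega) hb'le
  obtain ⟨q0, hq0l, hq0s⟩ := exists_segment p a' b' (by omega) hb'le
  have hadj : G.Adj (p.getVert a') (p.getVert b') := by
    apply key hG hch s (j := j) ha'P hPb' hxy
    refine ⟨q0, fun z hz => ?_⟩
    obtain ⟨m, hm1, hm2, rfl⟩ := hq0s z hz
    rcases eq_or_lt_of_le hm1 with rfl | h1
    · exact Or.inl rfl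
    rcases eq_or_lt_of_le hm2 with rfl | h2
    · exact Or.inr (Or.inl rfl)
    · exact Or.inr (Or.inr (hbetween m h1 h2))
  obtain ⟨q1, hq1l, hq1s⟩ := exists_segment p 0 a' (Nat.zero_le _) (by omega)
  obtain ⟨q2, hq2l, hq2s⟩ := exists_segment p b' p.length hb'le le_rfl
  set Q : G.Walk v w :=
    (q1.copy p.getVert_zero rfl).append (Walk.cons hadj (q2.copy rfl p.getVert_length)) with hQ
  have hQsup : ∀ z ∈ Q.support, z ∈ p.support := by
    intro z hz
    rw [hQ, Walk.mem_support_append_iff] at hz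
    rcases hz with hz | hz
    · rw [Walk.support_copy] at hz
      obtain ⟨m, _, hm2, hm3⟩ := hq1s z hz
      exact hm3 ▸ getVert_mem_support p (by omega)
    · rw [Walk.support_cons, List.mem_cons] at hz
      rcases hz with rfl | hz
      · exact getVert_mem_support p (by omega)
      · rw [Walk.support_copy] at hz
        obtain ⟨m, _, hm2, hm3⟩ := hq2s z hz
        exact hm3 ▸ getVert_mem_support p hm2
  have hQlen : Q.length = a' + (1 + (p.length - b')) := by
    rw [hQ, Walk.length_append, Walk.length_copy, Walk.length_cons, Walk.length_copy]
    omega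
  have hfinal := hmin Q.bypass Q.bypass_isPath
    (le_trans (le_trans Q.length_bypass_le (by omega)) hlen)
    (fun z hz => hwit z (hQsup z (Q.support_bypass_subset hz)))
  have := Q.length_bypass_le
  omega
end
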